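/- arXiv:1502.07203 — 6 statements merged into one kernel-verified Lean document; each statement's English description precedes it below -/
import Mathlib

section
/- Let α be an irrational real number, f ∈ ℚ[x] a nonzero polynomial, and q ∈ ℝ[x] a polynomial that has an irrational coefficient in some degree k ≥ 1. Then there exists d ≥ deg f such that the coefficient of x^d in α·f(x) + f(x)·q(x) is irrational. -/
open Polynomial

private lemma rat_sum_aux {ι : Type*} (s : Finset ι) (g : ι → ℝ)
    (h : ∀ i ∈ s, ∃ a : ℚ, g i = (a : ℝ)) : ∃ a : ℚ, ∑ i ∈ s, g i = (a : ℝ) := by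
  classical
  induction s using Finset.induction with
  | empty => exact ⟨0, by simp⟩
  | @insert x s' hx ih =>
    obtain ⟨a, ha⟩ := h x (Finset.mem_insert_self _ _)
    obtain ⟨b, hb⟩ := ih (fun i hi => h i (Finset.mem_insert_of_mem hi))
    exact ⟨a + b, by rw [Finset.sum_insert hx, ha, hb]; push_cast; ring⟩

theorem polynomial_recurrence_coeff_lemma
    (α : ℝ) (hα : Irrational α) (f q : ℝ[X]) (hf0 : f ≠ 0)
    (hf : ∀ n, ∃ a : ℚ, f.coeff n = (a : ℝ))
    (hq : ∃ k, 1 ≤ k ∧ Irrational (q.coeff k)) :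
    ∃ d, f.natDegree ≤ d ∧ Irrational ((C α * f + f * q).coeff d) := by
  classical
  obtain ⟨k0, hk01, hk0irr⟩ := hq
  have hk0le : k0 ≤ q.natDegree := by
    by_contra h
    rw [q.coeff_eq_zero_of_natDegree_lt (lt_of_not_ge h)] at hk0irr
    exact hk0irr ⟨0, by simp⟩
  set P : ℕ → Prop := fun k => Irrational (q.coeff k) with hPdef
  set K := Nat.findGreatest P q.natDegree with hKdef
  have hK1 : 1 ≤ K := le_trans hk01 (Nat.le_findGreatest hk0le hk0irr)
  have hPK : Irrational (q.coeff K) := Nat.findGreatest_spec (P := P) hk0le hk0irr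
  have hrat_above : ∀ j, K < j → ∃ a : ℚ, q.coeff j = (a : ℝ) := by
    intro j hj
    by_cases hjle : j ≤ q.natDegree
    · have := Nat.findGreatest_is_greatest (hKdef ▸ hj) hjle
      simp only [hPdef, Irrational] at this
      push_neg at this
      obtain ⟨a, ha⟩ := this
      exact ⟨a, ha.symm⟩
    · exact ⟨0, by rw [q.coeff_eq_zero_of_natDegree_lt (lt_of_not_ge hjle)]; simp⟩
  set n := f.natDegree with hn
  refine ⟨n + K, Nat.le_add_right _ _, ?_⟩
  have hfd : f.coeff (n + K) = 0 :=
    f.coeff_eq_zero_of_natDegree_lt (by omega)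
  have hmem : ((n, K) : ℕ × ℕ) ∈ Finset.HasAntidiagonal.antidiagonal (n + K) := by
    simp [Finset.HasAntidiagonal.mem_antidiagonal]
  have hsplit : (f * q).coeff (n + K) =
      f.coeff n * q.coeff K +
        ∑ x ∈ (Finset.HasAntidiagonal.antidiagonal (n + K)).erase (n, K), f.coeff x.1 * q.coeff x.2 := by
    rw [Polynomial.coeff_mul, ← Finset.add_sum_erase _ _ hmem]
  obtain ⟨r, hr⟩ : ∃ a : ℚ,
      (∑ x ∈ (Finset.HasAntidiagonal.antidiagonal (n + K)).erase (n, K), f.coeff x.1 * q.coeff x.2) = (a : ℝ) := by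
    apply rat_sum_aux
    rintro ⟨i, j⟩ hij
    obtain ⟨hne, hij⟩ := Finset.mem_erase.mp hij
    rw [Finset.HasAntidiagonal.mem_antidiagonal] at hij
    rcases lt_trichotomy i n with hi | hi | hi
    · obtain ⟨a, ha⟩ := hf i
      obtain ⟨b, hb⟩ := hrat_above j (by omega)
      exact ⟨a * b, by rw [ha, hb]; push_cast; ring⟩
    · exact absurd (by simp [hi]; omega : ((i, j) : ℕ × ℕ) = (n, K)) hne
    · refine ⟨0, ?_⟩
      rw [f.coeff_eq_zero_of_natDegree_lt hi]
      simp
  obtain ⟨c, hc⟩ := hf n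
  have hc0 : c ≠ 0 := by
    intro h
    apply hf0
    have : f.coeff n = 0 := by rw [hc, h]; simp
    exact Polynomial.leadingCoeff_eq_zero.mp this
  have : (C α * f + f * q).coeff (n + K) = (c : ℝ) * q.coeff K + (r : ℝ) := by
    rw [Polynomial.coeff_add, Polynomial.coeff_C_mul, hfd, mul_zero, zero_add,
      hsplit, hr, hc]
  rw [this]
  exact (Irrational.ratCast_mul hPK hc0).add_ratCast r
end

section
/- Let (X, 𝓑, μ) be a probability space, 𝓧₁, …, 𝓧ₗ sub-σ-algebras, and A ∈ 𝓑. Then ∫ 1_A · 𝔼(1_A|𝓧₁) ⋯ 𝔼(1_A|𝓧ₗ) dμ ≥ μ(A)^{l+1}. -/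
open MeasureTheory

open scoped ENNReal

/-- Arithmetic helper: for `a i ∈ [0,1]`, `∏ (a i + ε) ≤ ∏ a i + ((1+ε)^|s| - 1)`. -/
lemma prod_add_le_aux {ι : Type*} (s : Finset ι) (a : ι → ℝ) (ε : ℝ) (hε : 0 ≤ ε)
    (h0 : ∀ i ∈ s, 0 ≤ a i) (h1 : ∀ i ∈ s, a i ≤ 1) :
    ∏ i ∈ s, (a i + ε) ≤ ∏ i ∈ s, a i + ((1 + ε) ^ s.card - 1) := by
  classical
  induction s using Finset.cons_induction with
  | empty => simp
  | cons j s hj ih =>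
    have h0' : ∀ i ∈ s, 0 ≤ a i := fun i hi => h0 i (Finset.mem_cons_of_mem hi)
    have h1' : ∀ i ∈ s, a i ≤ 1 := fun i hi => h1 i (Finset.mem_cons_of_mem hi)
    have hP0 : (0:ℝ) ≤ ∏ i ∈ s, a i := Finset.prod_nonneg h0'
    have hP1 : ∏ i ∈ s, a i ≤ 1 := Finset.prod_le_one h0' h1'
    have haj0 : 0 ≤ a j := h0 j (Finset.mem_cons_self _ _)
    have haj1 : a j ≤ 1 := h1 j (Finset.mem_cons_self _ _)
    have hc : (0:ℝ) ≤ (1 + ε) ^ s.card - 1 := by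
      have : (1:ℝ) ≤ (1 + ε) ^ s.card := one_le_pow₀ (by linarith)
      linarith
    rw [Finset.prod_cons, Finset.prod_cons, Finset.card_cons]
    calc (a j + ε) * ∏ i ∈ s, (a i + ε)
        ≤ (a j + ε) * (∏ i ∈ s, a i + ((1 + ε) ^ s.card - 1)) := by
          apply mul_le_mul_of_nonneg_left (ih h0' h1') (by linarith)
      _ = a j * ∏ i ∈ s, a i + (a j * ((1+ε)^s.card - 1) + ε * ∏ i ∈ s, a i
            + ε * ((1+ε)^s.card - 1)) := by ring
      _ ≤ a j * ∏ i ∈ s, a i + ((1 + ε) ^ (s.card + 1) - 1) := by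
          have h1ε : (1:ℝ) * ((1+ε)^s.card - 1) + ε * 1 + ε * ((1+ε)^s.card - 1)
              = (1+ε)^(s.card+1) - 1 := by ring
          have : a j * ((1+ε)^s.card - 1) + ε * ∏ i ∈ s, a i + ε * ((1+ε)^s.card - 1)
              ≤ (1+ε)^(s.card+1) - 1 := by
            rw [← h1ε]
            have t1 : a j * ((1+ε)^s.card - 1) ≤ 1 * ((1+ε)^s.card - 1) :=
              mul_le_mul_of_nonneg_right haj1 hc
            have t2 : ε * ∏ i ∈ s, a i ≤ ε * 1 := mul_le_mul_of_nonneg_left hP1 hε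
            linarith
          linarith

lemma ofReal_prod_aux {ι : Type*} (s : Finset ι) (a : ι → ℝ) (h0 : ∀ i ∈ s, 0 ≤ a i) :
    ∏ i ∈ s, ENNReal.ofReal (a i) = ENNReal.ofReal (∏ i ∈ s, a i) := by
  classical
  induction s using Finset.cons_induction with
  | empty => simp
  | cons j s hj ih =>
    rw [Finset.prod_cons, Finset.prod_cons,
      ENNReal.ofReal_mul (h0 j (Finset.mem_cons_self _ _)),
      ih (fun i hi => h0 i (Finset.mem_cons_of_mem hi))]

theorem integral_indicator_mul_prod_condexp_ge
    {X : Type*} {m0 : MeasurableSpace X} (μ : Measure X) [IsProbabilityMeasure μ]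
    (l : ℕ) (𝓧 : Fin l → MeasurableSpace X) (h𝓧 : ∀ i, 𝓧 i ≤ m0)
    (A : Set X) (hA : MeasurableSet A) :
    (μ A).toReal ^ (l + 1) ≤
      ∫ x, A.indicator (fun _ => (1 : ℝ)) x *
        ∏ i, (μ[A.indicator (fun _ => (1 : ℝ)) | 𝓧 i]) x ∂μ := by
  classical
  set g : Fin l → X → ℝ := fun i => μ[A.indicator (fun _ => (1 : ℝ)) | 𝓧 i] with hg_def
  have hind_int : Integrable (A.indicator (fun _ => (1:ℝ))) μ :=
    (integrable_const (1:ℝ)).indicator hA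
  have hg_meas : ∀ i, StronglyMeasurable[𝓧 i] (g i) := fun i => stronglyMeasurable_condExp
  have hg_nonneg : ∀ i, 0 ≤ᵐ[μ] g i := fun i =>
    condExp_nonneg (Filter.Eventually.of_forall fun x =>
      Set.indicator_nonneg (fun _ _ => zero_le_one) x)
  have hg_le_one : ∀ i, g i ≤ᵐ[μ] fun _ => (1:ℝ) := by
    intro i
    have h1 : μ[(fun _ => (1:ℝ)) | 𝓧 i] = fun _ => (1:ℝ) := condExp_const (h𝓧 i) 1
    have := condExp_mono (m := 𝓧 i) (μ := μ) hind_int (integrable_const (1:ℝ))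
      (Filter.Eventually.of_forall fun x => Set.indicator_le_self' (fun _ _ => zero_le_one) x)
    rwa [h1] at this
  -- a.e. measurability of g i w.r.t. m0
  have hg_aesm : ∀ i, AEStronglyMeasurable (g i) μ := fun i =>
    ((hg_meas i).mono (h𝓧 i)).aestronglyMeasurable
  -- the target real integrand
  set Φ : X → ℝ := fun x => A.indicator (fun _ => (1:ℝ)) x * ∏ i, g i x with hΦ_def
  have hΦ_nonneg : 0 ≤ᵐ[μ] Φ := by
    filter_upwards [ae_all_iff.2 hg_nonneg] with x hx
    exact mul_nonneg (Set.indicator_nonneg (fun _ _ => zero_le_one) x)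
      (Finset.prod_nonneg fun i _ => hx i)
  have hΦ_meas : AEStronglyMeasurable Φ μ := by
    apply AEStronglyMeasurable.mul
    · exact ((stronglyMeasurable_const.indicator hA).aestronglyMeasurable)
    · exact Finset.aestronglyMeasurable_fun_prod _ fun i _ => hg_aesm i
  have hΦ_bdd : ∀ᵐ x ∂μ, ‖Φ x‖ ≤ 1 := by
    filter_upwards [ae_all_iff.2 hg_nonneg, ae_all_iff.2 hg_le_one] with x h0 h1
    have hprod0 : 0 ≤ ∏ i, g i x := Finset.prod_nonneg fun i _ => h0 i
    have hprod1 : ∏ i, g i x ≤ 1 := Finset.prod_le_one (fun i _ => h0 i) (fun i _ => h1 i)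
    have hi0 : 0 ≤ A.indicator (fun _ => (1:ℝ)) x :=
      Set.indicator_nonneg (fun _ _ => zero_le_one) x
    have hi1 : A.indicator (fun _ => (1:ℝ)) x ≤ 1 :=
      Set.indicator_le_self' (fun _ _ => zero_le_one) x
    rw [Real.norm_eq_abs, abs_of_nonneg (mul_nonneg hi0 hprod0)]
    calc A.indicator (fun _ => (1:ℝ)) x * ∏ i, g i x ≤ 1 * 1 :=
      mul_le_mul hi1 hprod1 hprod0 zero_le_one
    _ = 1 := mul_one 1
  have hΦ_int : Integrable Φ μ := Integrable.mono' (integrable_const (1:ℝ)) hΦ_meas hΦ_bdd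
  -- pass to lintegral
  have hint_eq : ∫ x, Φ x ∂μ = (∫⁻ x, ENNReal.ofReal (Φ x) ∂μ).toReal := by
    rw [← ofReal_integral_eq_lintegral_ofReal hΦ_int hΦ_nonneg,
      ENNReal.toReal_ofReal (integral_nonneg_of_ae hΦ_nonneg)]
  set I : ℝ≥0∞ := ∫⁻ x, ENNReal.ofReal (Φ x) ∂μ with hI_def
  have hI_le_one : I ≤ 1 := by
    calc I ≤ ∫⁻ _, 1 ∂μ := by
          apply lintegral_mono_ae
          filter_upwards [hΦ_bdd] with x hx
          exact ENNReal.ofReal_le_one.2 (le_of_abs_le (by rwa [Real.norm_eq_abs] at hx))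
    _ = 1 := by simp
  -- main claim in ENNReal
  have hmain : μ A ^ (l + 1) ≤ I := by
    have hstep : ∀ ε : ℝ, 0 < ε →
        μ A ^ (l + 1) ≤ I + ENNReal.ofReal ((1 + ε) ^ l - 1) := by
      intro ε hε
      -- the family of functions for Hölder
      set F : Option (Fin l) → X → ℝ≥0∞ := fun j x =>
        match j with
        | none => A.indicator (fun _ => (1:ℝ≥0∞)) x * ∏ i, ENNReal.ofReal (g i x + ε)
        | some i => A.indicator (fun _ => (1:ℝ≥0∞)) x * (ENNReal.ofReal (g i x + ε))⁻¹
        with hF_def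
      have hp_pos : (0:ℝ) < ((l:ℝ) + 1)⁻¹ := by positivity
      have hFnone : ∀ x, F none x
          = A.indicator (fun _ => (1:ℝ≥0∞)) x * ∏ i, ENNReal.ofReal (g i x + ε) :=
        fun x => rfl
      have hFsome : ∀ (i : Fin l) x, F (some i) x
          = A.indicator (fun _ => (1:ℝ≥0∞)) x * (ENNReal.ofReal (g i x + ε))⁻¹ :=
        fun i x => rfl
      -- each J i ≤ 1 via conditional expectation pull-out
      have hJ : ∀ i, ∫⁻ x, F (some i) x ∂μ ≤ 1 := by
        intro i
        set k : X → ℝ := fun x => (g i x + ε)⁻¹ with hk_def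
        have hk_sm : StronglyMeasurable[𝓧 i] k :=
          (((hg_meas i).measurable.add_const ε).inv).stronglyMeasurable
        have hk_bdd : ∀ᵐ x ∂μ, ‖k x‖ ≤ ε⁻¹ := by
          filter_upwards [hg_nonneg i] with x h0
          simp only [Pi.zero_apply] at h0
          rw [Real.norm_eq_abs, abs_of_nonneg (by positivity)]
          exact inv_anti₀ hε (by linarith)
        have hpull := condExp_stronglyMeasurable_mul_of_bound (h𝓧 i) hk_sm hind_int ε⁻¹ hk_bdd
        have hki_meas : AEStronglyMeasurable (fun x => k x * A.indicator (fun _ => (1:ℝ)) x) μ :=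
          ((hk_sm.mono (h𝓧 i)).aestronglyMeasurable).mul
            ((stronglyMeasurable_const.indicator hA).aestronglyMeasurable)
        have hki_bdd : ∀ᵐ x ∂μ, ‖k x * A.indicator (fun _ => (1:ℝ)) x‖ ≤ ε⁻¹ := by
          filter_upwards [hk_bdd] with x hx
          rw [norm_mul]
          have hi1 : ‖A.indicator (fun _ => (1:ℝ)) x‖ ≤ 1 := by
            rw [Real.norm_eq_abs, abs_of_nonneg (Set.indicator_nonneg (fun _ _ => zero_le_one) x)]
            exact Set.indicator_le_self' (fun _ _ => zero_le_one) x
          calc ‖k x‖ * ‖A.indicator (fun _ => (1:ℝ)) x‖ ≤ ε⁻¹ * 1 :=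
                mul_le_mul hx hi1 (norm_nonneg _) (by positivity)
            _ = ε⁻¹ := mul_one _
        have hki_int : Integrable (fun x => k x * A.indicator (fun _ => (1:ℝ)) x) μ :=
          (integrable_const (ε⁻¹ : ℝ)).mono' hki_meas hki_bdd
        have hki_nonneg : 0 ≤ᵐ[μ] fun x => k x * A.indicator (fun _ => (1:ℝ)) x := by
          filter_upwards [hg_nonneg i] with x h0
          simp only [Pi.zero_apply] at h0
          exact mul_nonneg (by positivity) (Set.indicator_nonneg (fun _ _ => zero_le_one) x)
        have h1 : ∫ x, k x * A.indicator (fun _ => (1:ℝ)) x ∂μ = ∫ x, k x * g i x ∂μ := by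
          calc ∫ x, k x * A.indicator (fun _ => (1:ℝ)) x ∂μ
              = ∫ x, (μ[(k * A.indicator (fun _ => (1:ℝ))) | 𝓧 i]) x ∂μ :=
                (integral_condExp (h𝓧 i)).symm
            _ = ∫ x, k x * g i x ∂μ := integral_congr_ae hpull
        have h2 : ∫ x, k x * g i x ∂μ ≤ 1 := by
          have hle : ∀ᵐ x ∂μ, k x * g i x ≤ 1 := by
            filter_upwards [hg_nonneg i] with x h0
            simp only [Pi.zero_apply] at h0
            rw [hk_def]
            rw [inv_mul_le_iff₀ (by linarith), mul_one]
            linarith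
          have hint2 : Integrable (fun x => k x * g i x) μ := by
            apply Integrable.mono' (integrable_const (ε⁻¹ : ℝ))
            · exact ((hk_sm.mono (h𝓧 i)).aestronglyMeasurable).mul (hg_aesm i)
            · filter_upwards [hg_nonneg i, hg_le_one i, hk_bdd] with x h0 h1 hk
              simp only [Pi.zero_apply] at h0
              rw [norm_mul]
              calc ‖k x‖ * ‖g i x‖ ≤ ε⁻¹ * 1 := by
                    apply mul_le_mul hk _ (norm_nonneg _) (by positivity)
                    rw [Real.norm_eq_abs, abs_of_nonneg h0]; exact h1
                _ = ε⁻¹ := mul_one _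
          calc ∫ x, k x * g i x ∂μ ≤ ∫ _x, (1:ℝ) ∂μ := integral_mono_ae hint2 (integrable_const 1) hle
            _ = 1 := by simp
        have h3 : ∀ᵐ x ∂μ, F (some i) x = ENNReal.ofReal (k x * A.indicator (fun _ => (1:ℝ)) x) := by
          filter_upwards [hg_nonneg i] with x h0
          simp only [Pi.zero_apply] at h0
          by_cases hx : x ∈ A
          · rw [hFsome, Set.indicator_of_mem hx, Set.indicator_of_mem hx, one_mul, mul_one,
              hk_def, ENNReal.ofReal_inv_of_pos (by linarith)]
          · rw [hFsome, Set.indicator_of_notMem hx, Set.indicator_of_notMem hx, zero_mul,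
              mul_zero, ENNReal.ofReal_zero]
        calc ∫⁻ x, F (some i) x ∂μ
            = ∫⁻ x, ENNReal.ofReal (k x * A.indicator (fun _ => (1:ℝ)) x) ∂μ :=
              lintegral_congr_ae h3
          _ = ENNReal.ofReal (∫ x, k x * A.indicator (fun _ => (1:ℝ)) x ∂μ) :=
              (ofReal_integral_eq_lintegral_ofReal hki_int hki_nonneg).symm
          _ ≤ 1 := ENNReal.ofReal_le_one.2 (h1.trans_le h2)
      -- a.e. pointwise Hölder identity
      have hae : ∀ᵐ x ∂μ, ∏ j : Option (Fin l), F j x ^ ((l:ℝ)+1)⁻¹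
          = A.indicator (fun _ => (1:ℝ≥0∞)) x := by
        filter_upwards [ae_all_iff.2 hg_nonneg] with x h0
        simp only [Pi.zero_apply] at h0
        by_cases hx : x ∈ A
        · have ha : ∀ i : Fin l, ENNReal.ofReal (g i x + ε) ≠ 0 := fun i =>
            (ENNReal.ofReal_pos.2 (by have := h0 i; linarith)).ne'
          have ha' : ∀ i : Fin l, ENNReal.ofReal (g i x + ε) ≠ ⊤ := fun i =>
            ENNReal.ofReal_ne_top
          rw [Set.indicator_of_mem hx, Fintype.prod_option]
          simp only [hFnone, hFsome, Set.indicator_of_mem hx, one_mul]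
          rw [← ENNReal.prod_rpow_of_nonneg (le_of_lt hp_pos), ← Finset.prod_mul_distrib]
          apply Finset.prod_eq_one
          intro i _
          rw [ENNReal.inv_rpow, ENNReal.mul_inv_cancel]
          · exact (ENNReal.rpow_pos ((ha i).bot_lt) (ha' i)).ne'
          · exact ENNReal.rpow_ne_top_of_nonneg (le_of_lt hp_pos) (ha' i)
        · rw [Set.indicator_of_notMem hx]
          apply Finset.prod_eq_zero (Finset.mem_univ (none : Option (Fin l)))
          rw [hFnone, Set.indicator_of_notMem hx, zero_mul,
            ENNReal.zero_rpow_of_pos hp_pos]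
      have hgm : ∀ i : Fin l, AEMeasurable (fun x => ENNReal.ofReal (g i x + ε)) μ :=
        fun i => ENNReal.measurable_ofReal.comp_aemeasurable
          (((hg_aesm i).aemeasurable).add_const ε)
      have hind_m : Measurable (A.indicator (fun _ => (1:ℝ≥0∞))) :=
        measurable_const.indicator hA
      have hmeasF : ∀ j : Option (Fin l), AEMeasurable (F j) μ := by
        intro j
        match j with
        | none =>
          exact hind_m.aemeasurable.mul (Finset.aemeasurable_fun_prod _ (fun i _ => hgm i))
        | some i =>
          exact hind_m.aemeasurable.mul (hgm i).inv
      have hsum : ∑ _j : Option (Fin l), ((l:ℝ)+1)⁻¹ = 1 := by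
        simp [Finset.card_univ]
        rw [mul_inv_cancel₀]
        positivity
      have hholder := ENNReal.lintegral_prod_norm_pow_le (μ := μ) Finset.univ
        (fun j _ => hmeasF j) hsum (fun j _ => le_of_lt hp_pos)
      have hμA : μ A ≤ (∫⁻ x, F none x ∂μ) ^ ((l:ℝ)+1)⁻¹ := by
        have h1 : μ A = ∫⁻ x, ∏ j : Option (Fin l), F j x ^ ((l:ℝ)+1)⁻¹ ∂μ := by
          rw [lintegral_congr_ae hae]
          exact (lintegral_indicator_one hA).symm
        calc μ A ≤ ∏ j : Option (Fin l), (∫⁻ x, F j x ∂μ) ^ ((l:ℝ)+1)⁻¹ :=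
              h1 ▸ hholder
          _ = (∫⁻ x, F none x ∂μ) ^ ((l:ℝ)+1)⁻¹
              * ∏ i : Fin l, (∫⁻ x, F (some i) x ∂μ) ^ ((l:ℝ)+1)⁻¹ := by
              rw [Fintype.prod_option]
          _ ≤ (∫⁻ x, F none x ∂μ) ^ ((l:ℝ)+1)⁻¹ * 1 := by
              apply mul_le_mul_right
              apply Finset.prod_le_one (fun i _ => zero_le)
              intro i _
              exact ENNReal.rpow_le_one (hJ i) (le_of_lt hp_pos)
          _ = (∫⁻ x, F none x ∂μ) ^ ((l:ℝ)+1)⁻¹ := mul_one _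
      have hpow : μ A ^ (l + 1) ≤ ∫⁻ x, F none x ∂μ := by
        have h2 := ENNReal.rpow_le_rpow hμA (by positivity : (0:ℝ) ≤ (l:ℝ)+1)
        rwa [← ENNReal.rpow_mul, inv_mul_cancel₀ (by positivity : ((l:ℝ)+1) ≠ 0),
          ENNReal.rpow_one, show ((l:ℝ)+1) = ((l+1 : ℕ) : ℝ) by push_cast; ring,
          ENNReal.rpow_natCast] at h2
      -- compare ∫⁻ F none with I
      have hcompare : ∫⁻ x, F none x ∂μ ≤ I + ENNReal.ofReal ((1 + ε) ^ l - 1) := by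
        have hpt : ∀ᵐ x ∂μ, F none x ≤ ENNReal.ofReal (Φ x)
            + ENNReal.ofReal ((1 + ε) ^ l - 1) * A.indicator (fun _ => (1:ℝ≥0∞)) x := by
          filter_upwards [ae_all_iff.2 hg_nonneg, ae_all_iff.2 hg_le_one] with x h0 h1
          simp only [Pi.zero_apply] at h0
          by_cases hx : x ∈ A
          · have hΦx : Φ x = ∏ i, g i x := by
              simp only [hΦ_def, Set.indicator_of_mem hx, one_mul]
            rw [hFnone, Set.indicator_of_mem hx, one_mul, mul_one, hΦx,
              ofReal_prod_aux Finset.univ _ (fun i _ => by have := h0 i; linarith)]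
            have hb := prod_add_le_aux Finset.univ (fun i => g i x) ε (le_of_lt hε)
              (fun i _ => h0 i) (fun i _ => h1 i)
            rw [Finset.card_univ, Fintype.card_fin] at hb
            calc ENNReal.ofReal (∏ i, (g i x + ε))
                ≤ ENNReal.ofReal (∏ i, g i x + ((1+ε)^l - 1)) := ENNReal.ofReal_le_ofReal hb
              _ = ENNReal.ofReal (∏ i, g i x) + ENNReal.ofReal ((1+ε)^l - 1) := by
                  rw [ENNReal.ofReal_add (Finset.prod_nonneg (fun i _ => h0 i))]
                  have : (1:ℝ) ≤ (1+ε)^l := one_le_pow₀ (by linarith)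
                  linarith
          · rw [hFnone, Set.indicator_of_notMem hx, zero_mul]
            exact zero_le
        calc ∫⁻ x, F none x ∂μ
            ≤ ∫⁻ x, (ENNReal.ofReal (Φ x)
              + ENNReal.ofReal ((1 + ε) ^ l - 1) * A.indicator (fun _ => (1:ℝ≥0∞)) x) ∂μ :=
              lintegral_mono_ae hpt
          _ = I + ENNReal.ofReal ((1 + ε) ^ l - 1) * μ A := by
              have hlint : ∫⁻ a, A.indicator (fun _ => (1:ℝ≥0∞)) a ∂μ = μ A :=
                lintegral_indicator_one hA
              rw [lintegral_add_right' _ ((hind_m.const_mul _).aemeasurable),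
                lintegral_const_mul _ hind_m, hlint]
          _ ≤ I + ENNReal.ofReal ((1 + ε) ^ l - 1) * 1 := by
              exact add_le_add_right (mul_le_mul_right prob_le_one _) I
          _ = I + ENNReal.ofReal ((1 + ε) ^ l - 1) := by rw [mul_one]
      exact hpow.trans hcompare
    refine ENNReal.le_of_forall_pos_le_add fun δ hδ _ => ?_
    obtain ⟨ε, hε, hεδ⟩ : ∃ ε : ℝ, 0 < ε ∧ (1+ε)^l - 1 ≤ (δ:ℝ) := by
      have hcont : Filter.Tendsto (fun ε : ℝ => (1+ε)^l - 1) (nhds 0) (nhds 0) := by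
        have hc : Continuous fun ε : ℝ => (1+ε)^l - 1 := by fun_prop
        have h := hc.tendsto 0
        simpa using h
      have h2 : Filter.Tendsto (fun ε : ℝ => (1+ε)^l - 1) (nhdsWithin 0 (Set.Ioi 0)) (nhds 0) :=
        hcont.mono_left nhdsWithin_le_nhds
      have hev := h2.eventually_lt_const (show (0:ℝ) < (δ:ℝ) from hδ)
      have hmem : ∀ᶠ ε in nhdsWithin (0:ℝ) (Set.Ioi 0), ε ∈ Set.Ioi (0:ℝ) :=
        eventually_mem_nhdsWithin
      obtain ⟨ε, h1, h2'⟩ := (hev.and hmem).exists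
      exact ⟨ε, h2', le_of_lt h1⟩
    calc μ A ^ (l+1) ≤ I + ENNReal.ofReal ((1+ε)^l - 1) := hstep ε hε
      _ ≤ I + δ := by
          apply add_le_add_right
          calc ENNReal.ofReal ((1+ε)^l - 1) ≤ ENNReal.ofReal (δ:ℝ) :=
                ENNReal.ofReal_le_ofReal hεδ
            _ = δ := ENNReal.ofReal_coe_nnreal
  -- conclude
  rw [hΦ_def] at hint_eq
  rw [hint_eq]
  have : ((μ A) ^ (l+1)).toReal ≤ I.toReal :=
    ENNReal.toReal_mono (lt_of_le_of_lt hI_le_one ENNReal.one_lt_top).ne hmain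
  rwa [ENNReal.toReal_pow] at this
end

section
/- Let (X, 𝓑, μ, T) be a measure-preserving system on a probability space, let A ∈ 𝓑 with μ(A) > 0, and let ε > 0. Then the set {n ∈ ℕ : μ(A ∩ T^{-n}A) ≥ μ(A)² − ε} is syndetic (has bounded gaps). -/
open MeasureTheory

/-- A set of naturals is syndetic if it has bounded gaps. -/
def Syndetic (S : Set ℕ) : Prop :=
  ∃ C : ℕ, ∀ᶠ x : ℕ in Filter.atTop, ∃ n ∈ S, x ≤ n ∧ n ≤ x + C

lemma indicatorConstLp_congr_set {X : Type*} [MeasurableSpace X] {μ : Measure X} {s t : Set X}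
    (h : s = t) (hs : MeasurableSet s) (hμs : μ s ≠ ⊤) (ht : MeasurableSet t) (hμt : μ t ≠ ⊤) :
    (indicatorConstLp 2 hs hμs (1:ℝ) : Lp ℝ 2 μ) = indicatorConstLp 2 ht hμt (1:ℝ) := by
  subst h; rfl

lemma inner_indicator_indicator {X : Type*} [MeasurableSpace X] (μ : Measure X)
    [IsFiniteMeasure μ] {A B : Set X} (hA : MeasurableSet A) (hB : MeasurableSet B) :
    (inner ℝ (indicatorConstLp 2 hA (measure_ne_top μ A) (1:ℝ) : Lp ℝ 2 μ)
      (indicatorConstLp 2 hB (measure_ne_top μ B) (1:ℝ)) : ℝ) = (μ (A ∩ B)).toReal := by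
  rw [L2.inner_indicatorConstLp_eq_setIntegral_inner]
  have h1 : ∀ᵐ x ∂(μ.restrict A),
      (inner ℝ (1:ℝ) ((indicatorConstLp 2 hB (measure_ne_top μ B) (1:ℝ) : Lp ℝ 2 μ) x) : ℝ)
        = B.indicator (fun _ => (1:ℝ)) x := by
    filter_upwards [ae_restrict_of_ae
      (indicatorConstLp_coeFn (p := 2) (hs := hB) (hμs := measure_ne_top μ B) (c := (1:ℝ)))]
      with x hx
    simp [hx]
  rw [integral_congr_ae h1, setIntegral_indicator hB, setIntegral_const]
  simp [measureReal_def]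

set_option maxHeartbeats 2000000 in
set_option synthInstance.maxHeartbeats 1000000 in
theorem khintchine_recurrence
    {X : Type*} [MeasurableSpace X] (μ : Measure X) [IsProbabilityMeasure μ]
    (T : X → X) (hT : MeasurePreserving T μ μ)
    (A : Set X) (hA : MeasurableSet A) (hApos : 0 < μ A) (ε : ℝ) (hε : 0 < ε) :
    Syndetic {n : ℕ | (μ A).toReal ^ 2 - ε ≤ (μ (A ∩ T^[n] ⁻¹' A)).toReal} := by
  classical
  -- Koopman operator on L²
  let U : Lp ℝ 2 μ →L[ℝ] Lp ℝ 2 μ :=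
    (Lp.compMeasurePreservingₗ ℝ T hT).mkContinuous 1 (fun g => by
      rw [one_mul]; exact le_of_eq (Lp.norm_compMeasurePreserving g hT))
  have hU1 : ‖U‖ ≤ 1 := LinearMap.mkContinuous_norm_le _ zero_le_one _
  have hUiso : ∀ g : Lp ℝ 2 μ, ‖U g‖ = ‖g‖ := fun g => Lp.norm_compMeasurePreserving g hT
  have hUiter_iso : ∀ (m : ℕ) (g : Lp ℝ 2 μ), ‖U^[m] g‖ = ‖g‖ := by
    intro m
    induction m with
    | zero => simp
    | succ m ih => intro g; rw [Function.iterate_succ_apply', hUiso, ih]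
  have hUpow : ∀ (m : ℕ) (g : Lp ℝ 2 μ), (U ^ m) g = U^[m] g := by
    intro m
    induction m with
    | zero => simp
    | succ m ih =>
        intro g
        rw [pow_succ, ContinuousLinearMap.mul_apply, ih, Function.iterate_succ_apply]
  -- the indicator functions
  let f : Lp ℝ 2 μ := indicatorConstLp 2 hA (measure_ne_top μ A) (1:ℝ)
  have hTn : ∀ n : ℕ, MeasurableSet (T^[n] ⁻¹' A) := fun n => hA.preimage (hT.measurable.iterate n)
  have hUind : ∀ (s : Set X) (hs : MeasurableSet s),
      U (indicatorConstLp 2 hs (measure_ne_top μ s) (1:ℝ))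
        = indicatorConstLp 2 (hs.preimage hT.measurable) (measure_ne_top μ _) (1:ℝ) := by
    intro s hs
    exact Lp.indicatorConstLp_compMeasurePreserving hs (measure_ne_top μ s) (1:ℝ) hT
  have hUn : ∀ n : ℕ, U^[n] f = indicatorConstLp 2 (hTn n) (measure_ne_top μ _) (1:ℝ) := by
    intro n
    induction n with
    | zero =>
        rw [Function.iterate_zero_apply]
        try exact indicatorConstLp_congr_set (by simp) _ _ _ _
    | succ n ih =>
        rw [Function.iterate_succ_apply', ih, hUind _ (hTn n)]
        try exact indicatorConstLp_congr_set (by rw [Function.iterate_succ, Set.preimage_comp]) _ _ _ _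
  -- inner products
  have hak : ∀ k : ℕ, (inner ℝ f (U^[k] f) : ℝ) = (μ (A ∩ T^[k] ⁻¹' A)).toReal := by
    intro k
    rw [hUn k]
    exact inner_indicator_indicator μ hA (hTn k)
  -- the constant function 1
  let one : Lp ℝ 2 μ := indicatorConstLp 2 MeasurableSet.univ (measure_ne_top μ _) (1:ℝ)
  have hone_norm : ‖one‖ = 1 := by
    rw [norm_indicatorConstLp (by norm_num) (by norm_num)]
    simp
  have hUone : U one = one := by
    rw [hUind _ MeasurableSet.univ]
    try exact indicatorConstLp_congr_set (by simp) _ _ _ _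
  -- orthogonal projection onto fixed subspace
  set K := LinearMap.eqLocus (U : Lp ℝ 2 μ →ₗ[ℝ] Lp ℝ 2 μ) ((1 : Lp ℝ 2 μ →L[ℝ] Lp ℝ 2 μ) : Lp ℝ 2 μ →ₗ[ℝ] Lp ℝ 2 μ) with hK
  have hone_mem : one ∈ K := by
    rw [hK, LinearMap.mem_eqLocus]
    simpa using hUone
  let g : Lp ℝ 2 μ := (Submodule.orthogonalProjectionOnto K f : Lp ℝ 2 μ)
  have hg_mem : g ∈ K := (Submodule.orthogonalProjectionOnto K f).2
  have hUg : U g = g := by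
    have h := hg_mem
    rw [hK, LinearMap.mem_eqLocus] at h
    simpa using h
  have hUmg : ∀ m : ℕ, U^[m] g = g := by
    intro m
    induction m with
    | zero => simp
    | succ m ih => rw [Function.iterate_succ_apply', ih, hUg]
  have hsub : ∀ v, v ∈ K → (inner ℝ (f - g) v : ℝ) = 0 := fun v hv =>
    K.starProjection_inner_eq_zero f v hv
  have hfg : (inner ℝ f g : ℝ) = ‖g‖ ^ 2 := by
    have h := hsub g hg_mem
    rw [inner_sub_left, sub_eq_zero] at h
    rw [h, real_inner_self_eq_norm_sq]
  have hfone : (inner ℝ f one : ℝ) = (μ A).toReal := by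
    have h := inner_indicator_indicator μ hA MeasurableSet.univ
    rw [Set.inter_univ] at h
    exact h
  have hgone : (inner ℝ g one : ℝ) = (μ A).toReal := by
    have h := hsub one hone_mem
    rw [inner_sub_left, sub_eq_zero] at h
    rw [← h, hfone]
  -- key lower bound : ⟪f, g⟫ ≥ μ(A)²
  have hlow : (μ A).toReal ^ 2 ≤ (inner ℝ f g : ℝ) := by
    rw [hfg]
    have hcs := abs_real_inner_le_norm g one
    rw [hone_norm, mul_one] at hcs
    calc (μ A).toReal ^ 2 = |(inner ℝ g one : ℝ)| ^ 2 := by rw [hgone]; rw [sq_abs]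
      _ ≤ ‖g‖ ^ 2 := by
          apply pow_le_pow_left₀ (abs_nonneg _) hcs
  -- mean ergodic theorem
  have hmean := ContinuousLinearMap.tendsto_birkhoffAverage_orthogonalProjection (𝕜 := ℝ) U hU1 f
  set ε' := ε / (2 * (‖f‖ + 1)) with hε'def
  have hfnorm_pos : (0:ℝ) < ‖f‖ + 1 := by positivity
  have hε' : 0 < ε' := by positivity
  obtain ⟨N₀, hN₀⟩ := Metric.tendsto_atTop.mp hmean ε' hε'
  set N := max N₀ 1 with hNdef
  have hN1 : 1 ≤ N := le_max_right _ _
  have hNpos : (0:ℝ) < (N:ℝ) := by exact_mod_cast hN1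
  have hclose : ‖birkhoffAverage ℝ (⇑U) _root_.id N f - g‖ < ε' := by
    have h := hN₀ N (le_max_left _ _)
    rw [dist_eq_norm] at h
    exact h
  set avg := birkhoffAverage ℝ (⇑U) _root_.id N f with havg
  have havg_sum : avg = (N:ℝ)⁻¹ • ∑ n ∈ Finset.range N, U^[n] f := by
    simp [havg, birkhoffAverage, birkhoffSum]
  -- main step: for every m, some n < N works
  have key : ∀ m : ℕ, ∃ n < N, (μ A).toReal ^ 2 - ε ≤ (μ (A ∩ T^[m+n] ⁻¹' A)).toReal := by
    intro m
    -- U^[m] avg is close to g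
    have hdist : ‖U^[m] avg - g‖ < ε' := by
      have : U^[m] avg - g = U^[m] avg - U^[m] g := by rw [hUmg m]
      rw [this, ← hUpow, ← hUpow, ← map_sub, hUpow, hUiter_iso]
      exact hclose
    -- inner f (U^[m] avg) ≥ inner f g - ε/2
    have hbound : (inner ℝ f g : ℝ) - ε / 2 ≤ (inner ℝ f (U^[m] avg) : ℝ) := by
      have h1 : (inner ℝ f (U^[m] avg) : ℝ) - (inner ℝ f g : ℝ) = inner ℝ f (U^[m] avg - g) := by
        rw [inner_sub_right]
      have h2 : |(inner ℝ f (U^[m] avg - g) : ℝ)| ≤ ‖f‖ * ‖U^[m] avg - g‖ :=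
        abs_real_inner_le_norm _ _
      have h3 : ‖f‖ * ‖U^[m] avg - g‖ ≤ ‖f‖ * ε' :=
        mul_le_mul_of_nonneg_left hdist.le (norm_nonneg f)
      have h4 : ‖f‖ * ε' ≤ ε / 2 := by
        have h0 : ‖f‖ + 1 ≠ 0 := ne_of_gt hfnorm_pos
        have hle : ‖f‖ * ε' ≤ (‖f‖ + 1) * ε' :=
          mul_le_mul_of_nonneg_right (by linarith) hε'.le
        have heq : (‖f‖ + 1) * ε' = ε / 2 := by
          rw [hε'def]; field_simp
        linarith
      have := (abs_le.mp (h2.trans (h3.trans h4))).1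
      linarith [h1 ▸ this]
    -- expand the inner product as an average
    have hexp : (inner ℝ f (U^[m] avg) : ℝ)
        = (N:ℝ)⁻¹ * ∑ n ∈ Finset.range N, (μ (A ∩ T^[m+n] ⁻¹' A)).toReal := by
      rw [havg_sum, ← hUpow, _root_.map_smul, map_sum, inner_smul_right, inner_sum]
      congr 1
      apply Finset.sum_congr rfl
      intro n _
      rw [hUpow, ← Function.iterate_add_apply, hak (m + n)]
    -- conclude: some term is large
    by_contra hcon
    push_neg at hcon
    have hall : ∀ n ∈ Finset.range N,
        (μ (A ∩ T^[m+n] ⁻¹' A)).toReal < (μ A).toReal ^ 2 - ε := by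
      intro n hn
      exact hcon n (Finset.mem_range.mp hn)
    have hsumlt : ∑ n ∈ Finset.range N, (μ (A ∩ T^[m+n] ⁻¹' A)).toReal
        < (N:ℝ) * ((μ A).toReal ^ 2 - ε) := by
      have := Finset.sum_lt_sum_of_nonempty
        (Finset.nonempty_range_iff.mpr (by omega)) hall
      simpa [Finset.sum_const, Finset.card_range, mul_sub] using this
    have : (inner ℝ f (U^[m] avg) : ℝ) < (μ A).toReal ^ 2 - ε := by
      rw [hexp]
      calc (N:ℝ)⁻¹ * ∑ n ∈ Finset.range N, (μ (A ∩ T^[m+n] ⁻¹' A)).toReal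
          < (N:ℝ)⁻¹ * ((N:ℝ) * ((μ A).toReal ^ 2 - ε)) := by
            apply mul_lt_mul_of_pos_left hsumlt (by positivity)
        _ = (μ A).toReal ^ 2 - ε := by field_simp
    linarith [hlow, hbound, this]
  -- assemble syndeticity
  refine ⟨N, Filter.Eventually.of_forall fun x => ?_⟩
  obtain ⟨n, hnN, hn⟩ := key x
  exact ⟨x + n, hn, Nat.le_add_right _ _, by omega⟩
end

section
/- Let p(t) ∈ ℝ[t] be a polynomial with at least one irrational coefficient in a degree ≥ 1 term. Then the sequence (p(n) mod 1)_{n∈ℕ} is equidistributed in the torus 𝕋 = ℝ/ℤ; equivalently, for every nonzero integer h, (1/N) Σ_{n=1}^{N} e(h·p(n)) → 0 as N → ∞, where e(x) = exp(2πix). -/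
open Polynomial Filter

namespace WeylAux
open Finset

noncomputable def ee (x : ℝ) : ℂ := Complex.exp (2 * Real.pi * Complex.I * x)

lemma ee_add (x y : ℝ) : ee (x + y) = ee x * ee y := by
  simp [ee, ← Complex.exp_add]; ring_nf

lemma norm_ee (x : ℝ) : ‖ee x‖ = 1 := by
  rw [ee, Complex.norm_exp]
  norm_num [Complex.mul_re]

lemma conj_ee (x : ℝ) : (starRingEnd ℂ) (ee x) = ee (-x) := by
  rw [ee, ee, ← Complex.exp_conj]
  congr 1
  simp only [map_mul, Complex.conj_I, Complex.conj_ofReal, map_ofNat]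
  push_cast
  ring

lemma ee_int_mul (z : ℤ) : ee z = 1 := by
  rw [ee, ← Complex.exp_int_mul_two_pi_mul_I z]
  congr 1
  push_cast
  ring

lemma ee_add_int (x : ℝ) (z : ℤ) : ee (x + z) = ee x := by
  rw [ee_add, ee_int_mul, mul_one]

lemma ee_ne_one {a : ℝ} (ha : Irrational a) : ee a ≠ 1 := by
  intro h
  rw [ee, Complex.exp_eq_one_iff] at h
  obtain ⟨n, hn⟩ := h
  have h2 : (2 * Real.pi * Complex.I) ≠ 0 := by
    simp [Real.pi_ne_zero, Complex.I_ne_zero]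
  have : (a : ℂ) = (n : ℂ) := by
    have : (a : ℂ) * (2 * Real.pi * Complex.I) = (n : ℂ) * (2 * Real.pi * Complex.I) := by
      rw [← hn]; ring
    exact mul_right_cancel₀ h2 this
  have : a = (n : ℝ) := by exact_mod_cast this
  exact (ha.ne_int n) this

lemma sum_norm_le_card (s : Finset ℕ) (f : ℕ → ℂ) (hf : ∀ n, ‖f n‖ ≤ 1) :
    ‖∑ n ∈ s, f n‖ ≤ s.card := by
  calc ‖∑ n ∈ s, f n‖ ≤ ∑ n ∈ s, ‖f n‖ := norm_sum_le _ _
    _ ≤ s.card • (1:ℝ) := Finset.sum_le_card_nsmul _ _ _ (fun x _ => hf x)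
    _ = s.card := by simp

lemma sum_range_shift (f : ℕ → ℂ) (N j : ℕ) :
    ∑ n ∈ Finset.range N, f (n + j) = ∑ n ∈ Finset.Ico j (N + j), f n := by
  rw [Finset.sum_Ico_eq_sum_range]
  simp [add_comm, Nat.add_sub_cancel]

lemma shift_bound (f : ℕ → ℂ) (hf : ∀ n, ‖f n‖ ≤ 1) (N j : ℕ) :
    ‖∑ n ∈ Finset.range N, f (n + j) - ∑ n ∈ Finset.range N, f n‖ ≤ 2 * j := by
  rcases le_or_gt j N with hj | hj
  · rw [sum_range_shift]
    have h1 : ∑ n ∈ Finset.Ico j N, f n + ∑ n ∈ Finset.Ico N (N + j), f n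
        = ∑ n ∈ Finset.Ico j (N + j), f n :=
      Finset.sum_Ico_consecutive f hj (Nat.le_add_right _ _)
    have h2 : ∑ n ∈ Finset.Ico 0 j, f n + ∑ n ∈ Finset.Ico j N, f n
        = ∑ n ∈ Finset.Ico 0 N, f n :=
      Finset.sum_Ico_consecutive f (Nat.zero_le _) hj
    have hr : Finset.range N = Finset.Ico 0 N := by rw [Finset.range_eq_Ico]
    rw [hr, ← h1, ← h2]
    have : ∑ n ∈ Finset.Ico j N, f n + ∑ n ∈ Finset.Ico N (N + j), f n -
        (∑ n ∈ Finset.Ico 0 j, f n + ∑ n ∈ Finset.Ico j N, f n)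
        = ∑ n ∈ Finset.Ico N (N + j), f n - ∑ n ∈ Finset.Ico 0 j, f n := by ring
    rw [this]
    calc ‖_ - _‖ ≤ ‖∑ n ∈ Finset.Ico N (N + j), f n‖ + ‖∑ n ∈ Finset.Ico 0 j, f n‖ :=
          norm_sub_le _ _
      _ ≤ (Finset.Ico N (N + j)).card + (Finset.Ico 0 j).card := by
          gcongr <;> exact sum_norm_le_card _ _ (fun n => hf n)
      _ ≤ 2 * j := by
          rw [Nat.card_Ico, Nat.card_Ico, Nat.add_sub_cancel_left, Nat.sub_zero]
          push_cast; ring_nf; rfl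
  · calc ‖_ - _‖ ≤ ‖∑ n ∈ Finset.range N, f (n + j)‖ + ‖∑ n ∈ Finset.range N, f n‖ :=
          norm_sub_le _ _
      _ ≤ (Finset.range N).card + (Finset.range N).card := by
          gcongr
          · exact sum_norm_le_card _ _ (fun n => hf (n + j))
          · exact sum_norm_le_card _ _ hf
      _ ≤ 2 * j := by
          simp only [Finset.card_range]
          push_cast
          have : (N:ℝ) ≤ j := by exact_mod_cast hj.le
          linarith

lemma ee_nat_mul (a : ℝ) (n : ℕ) : ee (a * n) = (ee a) ^ n := by
  rw [ee, ee, ← Complex.exp_nat_mul]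
  congr 1
  push_cast
  ring

lemma norm_inv_nat_mul (N : ℕ) (z : ℂ) : ‖(N : ℂ)⁻¹ * z‖ = ‖z‖ / N := by
  rw [norm_mul, norm_inv, Complex.norm_natCast, div_eq_inv_mul]

lemma geom_case (a b : ℝ) (ha : Irrational a) :
    Tendsto (fun N : ℕ => (N : ℂ)⁻¹ * ∑ n ∈ Finset.range N, ee (b + a * n))
      atTop (nhds 0) := by
  have hx : ee a ≠ 1 := ee_ne_one ha
  have hkey : ∀ N : ℕ, ‖(N : ℂ)⁻¹ * ∑ n ∈ Finset.range N, ee (b + a * n)‖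
      ≤ (2 / ‖ee a - 1‖) / N := by
    intro N
    rw [norm_inv_nat_mul]
    gcongr
    have : ∑ n ∈ Finset.range N, ee (b + a * n) = ee b * ((ee a) ^ N - 1) / (ee a - 1) := by
      simp only [ee_add, ee_nat_mul, ← Finset.mul_sum, geom_sum_eq hx, mul_div_assoc]
    rw [this, norm_div, norm_mul, norm_ee, one_mul]
    gcongr
    calc ‖(ee a) ^ N - 1‖ ≤ ‖(ee a) ^ N‖ + ‖(1:ℂ)‖ := norm_sub_le _ _
      _ ≤ 2 := by rw [norm_pow, norm_ee]; norm_num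
  rw [tendsto_zero_iff_norm_tendsto_zero]
  exact squeeze_zero (fun N => norm_nonneg _) hkey
    (tendsto_const_div_atTop_nhds_zero_nat _)

lemma vdc_ineq (u : ℕ → ℂ) (hu : ∀ n, ‖u n‖ ≤ 1) (H N : ℕ) (hH : 1 ≤ H)
    (δ : ℝ) (hδ : 0 ≤ δ)
    (hc : ∀ h ∈ Finset.Ico 1 H,
      ‖∑ n ∈ Finset.range N, u (n + h) * (starRingEnd ℂ) (u n)‖ ≤ δ * N) :
    ‖∑ n ∈ Finset.range N, u n‖
      ≤ Real.sqrt ((N : ℝ) * ((N : ℝ) / H + δ * N + 2 * H)) + 2 * H := by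
  set S := ∑ n ∈ Finset.range N, u n with hS
  set v : ℕ → ℂ := fun n => ∑ j ∈ Finset.range H, u (n + j) with hv
  set T : ℕ → ℕ → ℂ := fun j j' =>
    ∑ n ∈ Finset.range N, u (n + j) * (starRingEnd ℂ) (u (n + j')) with hT
  -- step 1
  have step1 : (H : ℝ) * ‖S‖ ≤ ‖∑ n ∈ Finset.range N, v n‖ + 2 * H ^ 2 := by
    have hsw : ∑ n ∈ Finset.range N, v n
        = ∑ j ∈ Finset.range H, ∑ n ∈ Finset.range N, u (n + j) := by
      rw [hv]; exact Finset.sum_comm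
    have hHS : (H : ℂ) * S = ∑ j ∈ Finset.range H, S := by
      simp [Finset.sum_const, Finset.card_range]
    have key : ‖(H : ℂ) * S - ∑ n ∈ Finset.range N, v n‖ ≤ 2 * H ^ 2 := by
      rw [hsw, hHS, ← Finset.sum_sub_distrib]
      calc ‖∑ j ∈ Finset.range H, (S - ∑ n ∈ Finset.range N, u (n + j))‖
          ≤ ∑ j ∈ Finset.range H, ‖S - ∑ n ∈ Finset.range N, u (n + j)‖ :=
            norm_sum_le _ _
        _ ≤ ∑ j ∈ Finset.range H, (2 * H : ℝ) := by
            refine Finset.sum_le_sum fun j hj => ?_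
            rw [norm_sub_rev]
            calc ‖∑ n ∈ Finset.range N, u (n + j) - S‖ ≤ 2 * j :=
                  shift_bound u hu N j
              _ ≤ 2 * H := by
                  have h2 : (j:ℝ) ≤ (H:ℝ) := by
                    exact_mod_cast (Finset.mem_range.1 hj).le
                  linarith
        _ = 2 * H ^ 2 := by rw [Finset.sum_const, Finset.card_range]; push_cast; ring
    have : (H : ℝ) * ‖S‖ = ‖(H : ℂ) * S‖ := by
      rw [norm_mul, Complex.norm_natCast]
    rw [this]
    calc ‖(H : ℂ) * S‖ ≤ ‖(H : ℂ) * S - ∑ n ∈ Finset.range N, v n‖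
          + ‖∑ n ∈ Finset.range N, v n‖ := by
          calc ‖(H : ℂ) * S‖
              = ‖((H : ℂ) * S - ∑ n ∈ Finset.range N, v n) + ∑ n ∈ Finset.range N, v n‖ := by
                ring_nf
            _ ≤ _ := norm_add_le _ _
      _ ≤ ‖∑ n ∈ Finset.range N, v n‖ + 2 * H ^ 2 := by linarith [key]
  -- step 2
  have step2 : ‖∑ n ∈ Finset.range N, v n‖ ^ 2 ≤ N * ∑ n ∈ Finset.range N, ‖v n‖ ^ 2 := by
    have cs := Finset.sum_mul_sq_le_sq_mul_sq (Finset.range N)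
      (fun _ => (1 : ℝ)) (fun n => ‖v n‖)
    simp only [one_mul, one_pow, Finset.sum_const, Finset.card_range, nsmul_eq_mul,
      mul_one] at cs
    calc ‖∑ n ∈ Finset.range N, v n‖ ^ 2 ≤ (∑ n ∈ Finset.range N, ‖v n‖) ^ 2 :=
          pow_le_pow_left₀ (norm_nonneg _) (norm_sum_le _ _) 2
      _ ≤ N * ∑ n ∈ Finset.range N, ‖v n‖ ^ 2 := cs
  -- step 3
  have hB : (0 : ℝ) ≤ δ * N + 2 * H := by positivity
  have off : ∀ j' j : ℕ, j' < j → j < H → ‖T j j'‖ ≤ δ * N + 2 * H := by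
    intro j' j hlt hjH
    set w : ℕ → ℂ := fun n => u (n + (j - j')) * (starRingEnd ℂ) (u n) with hw
    have hw1 : ∀ n, ‖w n‖ ≤ 1 := by
      intro n
      rw [hw]
      simp only [norm_mul, RCLike.norm_conj]
      exact mul_le_one₀ (hu _) (norm_nonneg _) (hu _)
    have hTw : T j j' = ∑ n ∈ Finset.range N, w (n + j') := by
      simp only [hT, hw]
      refine Finset.sum_congr rfl fun n _ => ?_
      have hnn : n + j' + (j - j') = n + j := by omega
      rw [hnn]
    have h1 : ‖∑ n ∈ Finset.range N, w (n + j') - ∑ n ∈ Finset.range N, w n‖ ≤ 2 * j' :=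
      shift_bound w hw1 N j'
    have h2 : ‖∑ n ∈ Finset.range N, w n‖ ≤ δ * N := by
      have hmem : j - j' ∈ Finset.Ico 1 H := by
        simp only [Finset.mem_Ico]
        omega
      exact hc (j - j') hmem
    have hj'H : (j' : ℝ) ≤ H := by exact_mod_cast (hlt.trans hjH).le
    calc ‖T j j'‖ = ‖(∑ n ∈ Finset.range N, w (n + j') - ∑ n ∈ Finset.range N, w n)
          + ∑ n ∈ Finset.range N, w n‖ := by rw [hTw, sub_add_cancel]
      _ ≤ 2 * j' + δ * N := by
          refine (norm_add_le _ _).trans ?_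
          gcongr
      _ ≤ δ * N + 2 * H := by linarith
  have hre : ∀ j ∈ Finset.range H, ∀ j' ∈ Finset.range H,
      (T j j').re ≤ (if j = j' then (N : ℝ) else 0) + (δ * N + 2 * H) := by
    intro j hj j' hj'
    rcases lt_trichotomy j j' with hlt | heq | hgt
    · have hconj : T j j' = (starRingEnd ℂ) (T j' j) := by
        rw [hT, map_sum]
        refine Finset.sum_congr rfl fun n _ => ?_
        simp [mul_comm]
      have hrr : (T j j').re = (T j' j).re := by rw [hconj, Complex.conj_re]
      rw [hrr, if_neg hlt.ne]
      have : (T j' j).re ≤ δ * N + 2 * H :=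
        (Complex.re_le_norm _).trans (off j j' hlt (Finset.mem_range.1 hj'))
      linarith
    · subst heq
      rw [if_pos rfl]
      have hnm : ‖T j j‖ ≤ (N : ℝ) := by
        refine (sum_norm_le_card _ _ (fun n => ?_)).trans (by simp)
        simp only [norm_mul, RCLike.norm_conj]
        exact mul_le_one₀ (hu _) (norm_nonneg _) (hu _)
      have := (Complex.re_le_norm (T j j)).trans hnm
      linarith
    · rw [if_neg hgt.ne']
      have : (T j j').re ≤ δ * N + 2 * H :=
        (Complex.re_le_norm _).trans (off j' j hgt (Finset.mem_range.1 hj))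
      linarith
  have step3 : ∑ n ∈ Finset.range N, ‖v n‖ ^ 2
      ≤ (H : ℝ) * N + H ^ 2 * (δ * N + 2 * H) := by
    have hvsq : ∀ n, ‖v n‖ ^ 2
        = ∑ j ∈ Finset.range H, ∑ j' ∈ Finset.range H,
            (u (n + j) * (starRingEnd ℂ) (u (n + j'))).re := by
      intro n
      have h1 : (‖v n‖ : ℝ) ^ 2 = (v n * (starRingEnd ℂ) (v n)).re := by
        rw [Complex.mul_conj]
        simp [Complex.normSq_eq_norm_sq, ← Complex.ofReal_pow]
      rw [h1, hv]
      rw [map_sum, Finset.sum_mul_sum, Complex.re_sum]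
      exact Finset.sum_congr rfl fun j _ => by rw [Complex.re_sum]
    calc ∑ n ∈ Finset.range N, ‖v n‖ ^ 2
        = ∑ j ∈ Finset.range H, ∑ j' ∈ Finset.range H, (T j j').re := by
          simp only [hvsq]
          rw [Finset.sum_comm]
          refine Finset.sum_congr rfl fun j _ => ?_
          rw [Finset.sum_comm]
          refine Finset.sum_congr rfl fun j' _ => ?_
          rw [hT, Complex.re_sum]
      _ ≤ ∑ j ∈ Finset.range H, ∑ j' ∈ Finset.range H,
            ((if j = j' then (N : ℝ) else 0) + (δ * N + 2 * H)) := by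
          refine Finset.sum_le_sum fun j hj => Finset.sum_le_sum fun j' hj' =>
            hre j hj j' hj'
      _ = (H : ℝ) * N + H ^ 2 * (δ * N + 2 * H) := by
          have hinner : ∀ j ∈ Finset.range H,
              ∑ j' ∈ Finset.range H, ((if j = j' then (N : ℝ) else 0) + (δ * N + 2 * H))
              = (N : ℝ) + H * (δ * N + 2 * H) := by
            intro j hj
            rw [Finset.sum_add_distrib, Finset.sum_ite_eq, if_pos hj, Finset.sum_const,
              Finset.card_range, nsmul_eq_mul]
          rw [Finset.sum_congr rfl hinner, Finset.sum_const, Finset.card_range,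
            nsmul_eq_mul]
          ring
  -- step 4
  have hHpos : (0 : ℝ) < H := by exact_mod_cast hH
  have hv2 : ‖∑ n ∈ Finset.range N, v n‖ ^ 2
      ≤ (N : ℝ) * ((H : ℝ) * N + H ^ 2 * (δ * N + 2 * H)) :=
    step2.trans (mul_le_mul_of_nonneg_left step3 (Nat.cast_nonneg N))
  have hs : ‖∑ n ∈ Finset.range N, v n‖
      ≤ Real.sqrt ((N : ℝ) * ((H : ℝ) * N + H ^ 2 * (δ * N + 2 * H))) := by
    rw [← Real.sqrt_sq (norm_nonneg (∑ n ∈ Finset.range N, v n))]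
    exact Real.sqrt_le_sqrt hv2
  have heq : Real.sqrt ((N : ℝ) * ((H : ℝ) * N + H ^ 2 * (δ * N + 2 * H)))
      = Real.sqrt ((N : ℝ) * ((N : ℝ) / H + δ * N + 2 * H)) * H := by
    have hH2 : (H : ℝ) = Real.sqrt ((H : ℝ) ^ 2) := (Real.sqrt_sq hHpos.le).symm
    have harg : (N : ℝ) * ((H : ℝ) * N + H ^ 2 * (δ * N + 2 * H))
        = ((N : ℝ) * ((N : ℝ) / H + δ * N + 2 * H)) * (H : ℝ) ^ 2 := by
      field_simp
      ring
    rw [harg]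
    rw [Real.sqrt_mul (by positivity) ((H : ℝ) ^ 2), ← hH2]
  have h5 : (H : ℝ) * ‖S‖
      ≤ (H : ℝ) * (Real.sqrt ((N : ℝ) * ((N : ℝ) / H + δ * N + 2 * H)) + 2 * H) := by
    calc (H : ℝ) * ‖S‖ ≤ ‖∑ n ∈ Finset.range N, v n‖ + 2 * H ^ 2 := step1
      _ ≤ Real.sqrt ((N : ℝ) * ((N : ℝ) / H + δ * N + 2 * H)) * H + 2 * H ^ 2 := by
          rw [← heq]; linarith
      _ = (H : ℝ) * (Real.sqrt ((N : ℝ) * ((N : ℝ) / H + δ * N + 2 * H)) + 2 * H) := by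
          ring
  exact le_of_mul_le_mul_left h5 hHpos

lemma vdc_tendsto (u : ℕ → ℂ) (hu : ∀ n, ‖u n‖ ≤ 1)
    (hcorr : ∀ h : ℕ, 1 ≤ h →
      Tendsto (fun N : ℕ => (N : ℂ)⁻¹ *
        ∑ n ∈ Finset.range N, u (n + h) * (starRingEnd ℂ) (u n)) atTop (nhds 0)) :
    Tendsto (fun N : ℕ => (N : ℂ)⁻¹ * ∑ n ∈ Finset.range N, u n) atTop (nhds 0) := by
  rw [NormedAddCommGroup.tendsto_nhds_zero]
  intro ε hε
  set H : ℕ := ⌈16 / ε ^ 2⌉₊ + 1 with hHdef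
  have hH1 : 1 ≤ H := Nat.le_add_left 1 _
  have hHpos : (0 : ℝ) < H := by positivity
  have hHbig : 16 / ε ^ 2 ≤ (H : ℝ) := by
    calc 16 / ε ^ 2 ≤ (⌈16 / ε ^ 2⌉₊ : ℝ) := Nat.le_ceil _
      _ ≤ H := by
          have : (⌈16 / ε ^ 2⌉₊ : ℝ) ≤ (⌈16 / ε ^ 2⌉₊ : ℝ) + 1 := by linarith
          rw [hHdef]; push_cast; linarith
  have hinvH : (1 : ℝ) / H ≤ ε ^ 2 / 16 := by
    rw [div_le_div_iff₀ hHpos (by norm_num)]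
    calc (1:ℝ) * 16 = 16 := by ring
      _ ≤ (16 / ε ^ 2) * (ε ^ 2) := by
          rw [div_mul_cancel₀]
          positivity
      _ ≤ (H : ℝ) * ε ^ 2 := by
          have : (0:ℝ) < ε ^ 2 := by positivity
          nlinarith [hHbig]
      _ = ε ^ 2 * H := by ring
  set δ : ℝ := ε ^ 2 / 16 with hδdef
  have hδpos : 0 < δ := by positivity
  -- eventual correlation bounds
  have E1 : ∀ᶠ N : ℕ in atTop, ∀ h ∈ Finset.Ico 1 H,
      ‖∑ n ∈ Finset.range N, u (n + h) * (starRingEnd ℂ) (u n)‖ ≤ δ * N := by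
    rw [eventually_all_finset]
    intro h hh
    have h1 : 1 ≤ h := (Finset.mem_Ico.1 hh).1
    have := (NormedAddCommGroup.tendsto_nhds_zero.1 (hcorr h h1)) δ hδpos
    filter_upwards [this, eventually_ge_atTop 1] with N hN hN1
    rw [norm_inv_nat_mul] at hN
    have hNpos : (0 : ℝ) < N := by exact_mod_cast hN1
    calc ‖∑ n ∈ Finset.range N, u (n + h) * (starRingEnd ℂ) (u n)‖
        = (‖∑ n ∈ Finset.range N, u (n + h) * (starRingEnd ℂ) (u n)‖ / N) * N := by
          field_simp
      _ ≤ δ * N := by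
          have := hN.le
          gcongr
  have E2 : ∀ᶠ N : ℕ in atTop, (2 : ℝ) * H ≤ ε ^ 2 / 16 * N := by
    have : Tendsto (fun N : ℕ => ε ^ 2 / 16 * N) atTop atTop := by
      apply Tendsto.const_mul_atTop (by positivity)
      exact tendsto_natCast_atTop_atTop
    exact this.eventually_ge_atTop _
  have E3 : ∀ᶠ N : ℕ in atTop, (2 : ℝ) * H < ε / 2 * N := by
    have : Tendsto (fun N : ℕ => ε / 2 * N) atTop atTop := by
      apply Tendsto.const_mul_atTop (by positivity)
      exact tendsto_natCast_atTop_atTop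
    exact this.eventually_gt_atTop _
  filter_upwards [E1, E2, E3, eventually_ge_atTop 1] with N hc h2 h3 hN1
  have hNpos : (0 : ℝ) < N := by exact_mod_cast hN1
  have key := vdc_ineq u hu H N hH1 δ hδpos.le hc
  rw [norm_inv_nat_mul, div_lt_iff₀ hNpos]
  have hsq : Real.sqrt ((N : ℝ) * ((N : ℝ) / H + δ * N + 2 * H)) ≤ ε / 2 * N := by
    have harg : (N : ℝ) * ((N : ℝ) / H + δ * N + 2 * H) ≤ (ε / 2 * N) ^ 2 := by
      have hNH : (N : ℝ) / H ≤ ε ^ 2 / 16 * N := by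
        rw [div_eq_mul_one_div]
        calc (N : ℝ) * (1 / H) ≤ (N : ℝ) * (ε ^ 2 / 16) :=
              mul_le_mul_of_nonneg_left hinvH (Nat.cast_nonneg N)
          _ = ε ^ 2 / 16 * N := by ring
      have hδN : δ * N = ε ^ 2 / 16 * N := by rw [hδdef]
      calc (N : ℝ) * ((N : ℝ) / H + δ * N + 2 * H)
          ≤ (N : ℝ) * (ε ^ 2 / 16 * N + ε ^ 2 / 16 * N + ε ^ 2 / 16 * N) := by
            apply mul_le_mul_of_nonneg_left _ (Nat.cast_nonneg N)
            rw [hδN]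
            linarith
        _ = 3 * (ε ^ 2 / 16) * N ^ 2 := by ring
        _ ≤ (ε / 2 * N) ^ 2 := by nlinarith [sq_nonneg (ε * N)]
    calc Real.sqrt ((N : ℝ) * ((N : ℝ) / H + δ * N + 2 * H))
        ≤ Real.sqrt ((ε / 2 * N) ^ 2) := Real.sqrt_le_sqrt harg
      _ = ε / 2 * N := Real.sqrt_sq (by positivity)
  calc ‖∑ n ∈ Finset.range N, u n‖
      ≤ Real.sqrt ((N : ℝ) * ((N : ℝ) / H + δ * N + 2 * H)) + 2 * H := key
    _ < ε / 2 * N + ε / 2 * N := by linarith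
    _ = ε * N := by ring

lemma prog_sum (f : ℕ → ℂ) (s M : ℕ) :
    ∑ n ∈ Finset.range (s * M), f n
      = ∑ r ∈ Finset.range s, ∑ m ∈ Finset.range M, f (s * m + r) := by
  induction M with
  | zero => simp
  | succ M ih =>
    have h1 : s * (M + 1) = s * M + s := by ring
    have h2 : ∑ n ∈ Finset.range (s * M + s), f n
        = ∑ n ∈ Finset.range (s * M), f n + ∑ k ∈ Finset.range s, f (s * M + k) := by
      have e1 : ∑ n ∈ Finset.Ico (s * M) (s * M + s), f n
          = ∑ k ∈ Finset.range s, f (s * M + k) := by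
        rw [Finset.sum_Ico_eq_sum_range]
        simp
      rw [Finset.range_eq_Ico, ← Finset.sum_Ico_consecutive f (Nat.zero_le (s * M))
        (Nat.le_add_right (s * M) s), e1, ← Finset.range_eq_Ico]
    rw [h1, h2, ih]
    rw [← Finset.sum_add_distrib]
    exact Finset.sum_congr rfl fun r _ => by rw [Finset.sum_range_succ]

lemma prog_tendsto (f : ℕ → ℂ) (hf : ∀ n, ‖f n‖ ≤ 1) (s : ℕ) (hs : 1 ≤ s)
    (hr : ∀ r < s, Tendsto (fun M : ℕ => (M : ℂ)⁻¹ *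
        ∑ m ∈ Finset.range M, f (s * m + r)) atTop (nhds 0)) :
    Tendsto (fun N : ℕ => (N : ℂ)⁻¹ * ∑ n ∈ Finset.range N, f n) atTop (nhds 0) := by
  rw [NormedAddCommGroup.tendsto_nhds_zero]
  intro ε hε
  have hspos : (0 : ℝ) < s := by exact_mod_cast hs
  have E1 : ∀ᶠ M : ℕ in atTop, ∀ r ∈ Finset.range s,
      ‖∑ m ∈ Finset.range M, f (s * m + r)‖ ≤ ε / (2 * s) * M := by
    rw [eventually_all_finset]
    intro r hr'
    have := (NormedAddCommGroup.tendsto_nhds_zero.1 (hr r (Finset.mem_range.1 hr')))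
      (ε / (2 * s)) (by positivity)
    filter_upwards [this, eventually_ge_atTop 1] with M hM hM1
    rw [norm_inv_nat_mul] at hM
    have hMpos : (0 : ℝ) < M := by exact_mod_cast hM1
    calc ‖∑ m ∈ Finset.range M, f (s * m + r)‖
        = ‖∑ m ∈ Finset.range M, f (s * m + r)‖ / M * M := by field_simp
      _ ≤ ε / (2 * s) * M := by
          have := hM.le
          gcongr
  obtain ⟨M₀, hM₀⟩ := eventually_atTop.1 E1
  have E2 : ∀ᶠ N : ℕ in atTop, (s : ℝ) < ε / 2 * N := by
    have : Tendsto (fun N : ℕ => ε / 2 * N) atTop atTop :=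
      Tendsto.const_mul_atTop (by positivity) tendsto_natCast_atTop_atTop
    exact this.eventually_gt_atTop _
  filter_upwards [eventually_ge_atTop (s * M₀ + s), E2, eventually_ge_atTop 1]
    with N hN hsN hN1
  have hNpos : (0 : ℝ) < N := by exact_mod_cast hN1
  set M : ℕ := N / s with hM
  have hMge : M₀ ≤ M := by
    rw [hM]
    rw [Nat.le_div_iff_mul_le (by omega), mul_comm]
    omega
  have hsMle : s * M ≤ N := by
    rw [hM, mul_comm]
    exact Nat.div_mul_le_self N s
  have hdiff : N - s * M < s := by
    have h1 : N - s * M = N % s :=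
      Nat.sub_eq_of_eq_add (by rw [hM, add_comm]; exact (Nat.div_add_mod N s).symm)
    rw [h1]
    exact Nat.mod_lt N (by omega)
  have hMleN : (M : ℝ) ≤ N := by
    exact_mod_cast (Nat.div_le_self N s)
  have hsplit : ∑ n ∈ Finset.range N, f n
      = ∑ n ∈ Finset.range (s * M), f n + ∑ n ∈ Finset.Ico (s * M) N, f n := by
    rw [Finset.range_eq_Ico, ← Finset.sum_Ico_consecutive f (Nat.zero_le _) hsMle,
      ← Finset.range_eq_Ico]
  have hbound : ‖∑ n ∈ Finset.range N, f n‖ < ε * N := by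
    rw [hsplit]
    have b1 : ‖∑ n ∈ Finset.range (s * M), f n‖ ≤ ε / 2 * N := by
      rw [prog_sum]
      calc ‖∑ r ∈ Finset.range s, ∑ m ∈ Finset.range M, f (s * m + r)‖
          ≤ ∑ r ∈ Finset.range s, ‖∑ m ∈ Finset.range M, f (s * m + r)‖ :=
            norm_sum_le _ _
        _ ≤ ∑ r ∈ Finset.range s, ε / (2 * s) * M :=
            Finset.sum_le_sum fun r hr' => hM₀ M hMge r hr'
        _ = ε / 2 * M := by
            rw [Finset.sum_const, Finset.card_range, nsmul_eq_mul]
            field_simp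
        _ ≤ ε / 2 * N := by gcongr
    have b2 : ‖∑ n ∈ Finset.Ico (s * M) N, f n‖ < ε / 2 * N := by
      calc ‖∑ n ∈ Finset.Ico (s * M) N, f n‖ ≤ (Finset.Ico (s * M) N).card :=
            sum_norm_le_card _ _ hf
        _ = ((N - s * M : ℕ) : ℝ) := by rw [Nat.card_Ico]
        _ ≤ (s : ℝ) := by exact_mod_cast hdiff.le
        _ < ε / 2 * N := hsN
    calc ‖_ + _‖ ≤ ‖∑ n ∈ Finset.range (s * M), f n‖ + ‖∑ n ∈ Finset.Ico (s * M) N, f n‖ :=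
          norm_add_le _ _
      _ < ε / 2 * N + ε / 2 * N := by
          have := b1
          linarith
      _ = ε * N := by ring
  rw [norm_inv_nat_mul, div_lt_iff₀ hNpos]
  exact hbound

lemma comp_shift_coeff (q : ℝ[X]) (c : ℝ) (hd : 1 ≤ q.natDegree) :
    (q.comp (X + C c)).coeff (q.natDegree - 1)
      = q.coeff (q.natDegree - 1) + q.natDegree * q.coeff q.natDegree * c := by
  set d := q.natDegree with hdd
  have hcomp : q.comp (X + C c)
      = ∑ k ∈ Finset.range (d + 1), C (q.coeff k) * (X + C c) ^ k := by
    rw [comp_eq_sum_left]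
    exact Polynomial.sum_over_range
      (p := q) (f := fun e a => C a * (X + C c) ^ e) (fun n => by simp)
  rw [hcomp, Polynomial.finset_sum_coeff]
  have hterm : ∀ k, (C (q.coeff k) * (X + C c) ^ k).coeff (d - 1)
      = q.coeff k * (c ^ (k - (d - 1)) * (k.choose (d - 1))) := by
    intro k
    rw [Polynomial.coeff_C_mul, Polynomial.coeff_X_add_C_pow]
  have hsub : ({d - 1, d} : Finset ℕ) ⊆ Finset.range (d + 1) := by
    intro x hx
    simp only [Finset.mem_insert, Finset.mem_singleton] at hx
    rcases hx with h | h <;> simp [h] <;> omega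
  rw [← Finset.sum_subset hsub]
  · have hne : (d - 1) ≠ d := by omega
    rw [Finset.sum_insert (by simp [hne]), Finset.sum_singleton, hterm, hterm]
    have e1 : (d - 1) - (d - 1) = 0 := by omega
    have e2 : d - (d - 1) = 1 := by omega
    have e3 : (d - 1).choose (d - 1) = 1 := Nat.choose_self _
    have e4 : d.choose (d - 1) = d := by
      rw [Nat.choose_symm hd, Nat.choose_one_right]
    rw [e1, e2, e3, e4]
    push_cast
    ring
  · intro k hk hknot
    rw [hterm]
    have : k < d - 1 := by
      simp only [Finset.mem_insert, Finset.mem_singleton] at hknot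
      push_neg at hknot
      simp only [Finset.mem_range] at hk
      omega
    rw [Nat.choose_eq_zero_of_lt this]
    simp

lemma diff_natDegree_le (q : ℝ[X]) (c : ℝ) (hd : 1 ≤ q.natDegree) :
    (q.comp (X + C c) - q).natDegree ≤ q.natDegree - 1 := by
  set d := q.natDegree with hdd
  have hXC : (X + C c).natDegree = 1 := by
    simpa using Polynomial.natDegree_X_add_C c
  have hcompdeg : (q.comp (X + C c)).natDegree = d := by
    rw [Polynomial.natDegree_comp, hXC, mul_one]
  rw [Polynomial.natDegree_le_iff_coeff_eq_zero]
  intro m hm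
  rw [Polynomial.coeff_sub]
  rcases eq_or_lt_of_le (show d ≤ m by omega) with heq | hlt
  · subst heq
    have h1 : (q.comp (X + C c)).coeff d = (q.comp (X + C c)).leadingCoeff := by
      rw [Polynomial.leadingCoeff, hcompdeg]
    have h2 : (q.comp (X + C c)).leadingCoeff = q.leadingCoeff := by
      rw [Polynomial.leadingCoeff_comp (by rw [hXC]; norm_num)]
      simp [Polynomial.leadingCoeff_X_add_C]
    rw [h1, h2, Polynomial.leadingCoeff]
    ring
  · rw [Polynomial.coeff_eq_zero_of_natDegree_lt (by rw [hcompdeg]; exact hlt),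
      Polynomial.coeff_eq_zero_of_natDegree_lt hlt]
    ring

lemma affine_comp_inv (u v : ℚ) (hu : u ≠ 0) (q : ℝ[X]) :
    (q.comp (C (u:ℝ) * X + C (v:ℝ))).comp
      (C ((u:ℝ)⁻¹) * X + C (-(v:ℝ) * (u:ℝ)⁻¹)) = q := by
  rw [Polynomial.comp_assoc]
  have hu' : (u:ℝ) ≠ 0 := by exact_mod_cast hu
  have : (C (u:ℝ) * X + C (v:ℝ)).comp (C ((u:ℝ)⁻¹) * X + C (-(v:ℝ) * (u:ℝ)⁻¹)) = X := by
    simp only [Polynomial.add_comp, Polynomial.mul_comp, Polynomial.C_comp,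
      Polynomial.X_comp]
    rw [mul_add, ← mul_assoc, ← Polynomial.C_mul, ← Polynomial.C_mul]
    rw [mul_inv_cancel₀ hu', add_assoc, ← Polynomial.C_add]
    have h0 : (u:ℝ) * (-(v:ℝ) * (u:ℝ)⁻¹) + (v:ℝ) = 0 := by
      field_simp
      ring
    rw [h0]
    simp
  rw [this, Polynomial.comp_X]

lemma irrational_coeff_comp (q : ℝ[X]) (u v : ℚ) (hu : u ≠ 0)
    (hq : ∃ k, 1 ≤ k ∧ Irrational (q.coeff k)) :
    ∃ k, 1 ≤ k ∧ Irrational ((q.comp (C (u:ℝ) * X + C (v:ℝ))).coeff k) := by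
  by_contra hcon
  push_neg at hcon
  set P : ℝ[X] := q.comp (C (u:ℝ) * X + C (v:ℝ)) with hP
  -- all coefficients of P - C (P.coeff 0) are rational
  set P₀ : ℝ[X] := P - C (P.coeff 0) with hP₀
  have hrat : ∀ k, P₀.coeff k ∈ Set.range ((↑) : ℚ → ℝ) := by
    intro k
    rcases Nat.eq_zero_or_pos k with rfl | hk
    · rw [hP₀]
      simp
    · have h2 := hcon k hk
      rw [Irrational] at h2
      push_neg at h2
      rw [hP₀]
      simpa [Polynomial.coeff_sub, Polynomial.coeff_C, Nat.pos_iff_ne_zero.1 hk] using h2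
  have hlift : P₀ ∈ Polynomial.lifts (algebraMap ℚ ℝ) := by
    rw [Polynomial.lifts_iff_coeff_lifts]
    intro n
    obtain ⟨a, ha⟩ := hrat n
    exact ⟨a, by simpa using ha⟩
  obtain ⟨Q, hQ'⟩ := hlift
  have hQ : Polynomial.map (algebraMap ℚ ℝ) Q = P₀ := by
    rw [← Polynomial.coe_mapRingHom]
    exact hQ'
  -- invert the affine substitution
  obtain ⟨k, hk1, hkirr⟩ := hq
  have hqeq : q = P.comp (C ((u:ℝ)⁻¹) * X + C (-(v:ℝ) * (u:ℝ)⁻¹)) :=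
    (affine_comp_inv u v hu q).symm
  set B : ℚ[X] := C u⁻¹ * X + C (-v * u⁻¹) with hB
  have hmapB : Polynomial.map (algebraMap ℚ ℝ) B
      = C ((u:ℝ)⁻¹) * X + C (-(v:ℝ) * (u:ℝ)⁻¹) := by
    rw [hB]
    simp only [Polynomial.map_add, Polynomial.map_mul, Polynomial.map_C, Polynomial.map_X]
    push_cast
    norm_num
  have hqeq2 : q = C (P.coeff 0)
      + Polynomial.map (algebraMap ℚ ℝ) (Q.comp B) := by
    rw [Polynomial.map_comp, hQ, hmapB]
    rw [hqeq]
    conv_lhs => rw [show P = C (P.coeff 0) + P₀ by rw [hP₀]; ring]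
    rw [Polynomial.add_comp, Polynomial.C_comp]
  apply hkirr
  rw [hqeq2, Polynomial.coeff_add, Polynomial.coeff_C, if_neg (by omega),
    Polynomial.coeff_map, zero_add]
  exact ⟨(Q.comp B).coeff k, by simp [eq_ratCast]⟩


lemma rat_pow_residue (ρ : ℚ) (d m r : ℕ) :
    ∃ z : ℤ, (ρ : ℝ) * ((ρ.den * m + r : ℕ) : ℝ) ^ d = (ρ : ℝ) * (r : ℝ) ^ d + z := by
  have hmod : ((ρ.den * m + r : ℕ) : ℤ) ^ d ≡ (r : ℤ) ^ d [ZMOD (ρ.den : ℤ)] := by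
    apply Int.ModEq.pow
    have he : ((ρ.den * m + r : ℕ) : ℤ) = (ρ.den : ℤ) * m + r := by push_cast; ring
    rw [he]
    rw [Int.modEq_iff_dvd]
    have : (r : ℤ) - ((ρ.den : ℤ) * m + r) = -((ρ.den : ℤ) * m) := by ring
    rw [this]
    exact dvd_neg.2 (Dvd.intro m rfl)
  obtain ⟨K, hK⟩ : (ρ.den : ℤ) ∣ ((ρ.den * m + r : ℕ) : ℤ) ^ d - (r : ℤ) ^ d :=
    (Int.ModEq.dvd hmod.symm)
  refine ⟨ρ.num * K, ?_⟩
  have hden : (ρ : ℝ) * (ρ.den : ℝ) = (ρ.num : ℝ) := by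
    exact_mod_cast Rat.mul_den_eq_num ρ
  have hKr : (((ρ.den * m + r : ℕ) : ℝ)) ^ d - (r : ℝ) ^ d = (ρ.den : ℝ) * K := by
    have := congrArg (Int.cast : ℤ → ℝ) hK
    push_cast at this ⊢
    linarith
  have hstep : (((ρ.den * m + r : ℕ) : ℝ)) ^ d = (r : ℝ) ^ d + (ρ.den : ℝ) * K := by
    linarith
  rw [hstep]
  push_cast
  calc (ρ : ℝ) * ((r : ℝ) ^ d + (ρ.den : ℝ) * K)
      = (ρ : ℝ) * (r : ℝ) ^ d + ((ρ : ℝ) * (ρ.den : ℝ)) * K := by ring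
    _ = (ρ : ℝ) * (r : ℝ) ^ d + (ρ.num : ℝ) * K := by rw [hden]

theorem main_induction : ∀ d : ℕ, ∀ q : ℝ[X], q.natDegree ≤ d →
    (∃ k, 1 ≤ k ∧ Irrational (q.coeff k)) →
    Tendsto (fun N : ℕ => (N : ℂ)⁻¹ * ∑ n ∈ Finset.range N, ee (q.eval (n : ℝ)))
      atTop (nhds 0) := by
  intro d
  induction d using Nat.strong_induction_on with
  | _ d IH =>
  rintro q hdeg ⟨k, hk1, hkirr⟩
  have hk_le : k ≤ q.natDegree := Polynomial.le_natDegree_of_ne_zero hkirr.ne_zero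
  have hd1 : 1 ≤ q.natDegree := hk1.trans hk_le
  by_cases hlead : Irrational (q.coeff q.natDegree)
  · -- Case A : irrational leading coefficient
    by_cases hdeg1 : q.natDegree = 1
    · -- geometric case
      have ha : Irrational (q.coeff 1) := by rwa [hdeg1] at hlead
      have heval : ∀ n : ℕ, q.eval (n : ℝ) = q.coeff 0 + q.coeff 1 * n := by
        intro n
        rw [Polynomial.eval_eq_sum_range, hdeg1]
        simp [Finset.sum_range_succ]
      have := geom_case (q.coeff 1) (q.coeff 0) ha
      refine this.congr fun N => ?_
      congr 1
      exact Finset.sum_congr rfl fun n _ => by rw [heval n]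
    · -- van der Corput case, natDegree ≥ 2
      have hD2 : 2 ≤ q.natDegree := by omega
      apply vdc_tendsto (u := fun n => ee (q.eval (n : ℝ))) (fun n => le_of_eq (norm_ee _))
      intro h hh1
      set qh : ℝ[X] := q.comp (X + C (h : ℝ)) - q with hqh
      have hcoeff : qh.coeff (q.natDegree - 1)
          = ((q.natDegree * h : ℕ) : ℝ) * q.coeff q.natDegree := by
        rw [hqh, Polynomial.coeff_sub, comp_shift_coeff q _ hd1]
        push_cast
        ring
      have hirr_h : Irrational (qh.coeff (q.natDegree - 1)) := by
        rw [hcoeff]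
        exact hlead.natCast_mul (by positivity)
      have hdegh : qh.natDegree ≤ q.natDegree - 1 := diff_natDegree_le q _ hd1
      have hIH := IH (q.natDegree - 1) (by omega) qh hdegh
        ⟨q.natDegree - 1, by omega, hirr_h⟩
      refine hIH.congr fun N => ?_
      congr 1
      refine Finset.sum_congr rfl fun n _ => ?_
      rw [conj_ee, ← ee_add]
      congr 1
      rw [hqh, Polynomial.eval_sub, Polynomial.eval_comp]
      push_cast
      simp only [Polynomial.eval_add, Polynomial.eval_X, Polynomial.eval_C]
      ring
  · -- Case B : rational leading coefficient
    have hkD : k ≠ q.natDegree := fun he => hlead (he ▸ hkirr)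
    rw [Irrational] at hlead
    push_neg at hlead
    obtain ⟨ρ, hρ⟩ := hlead
    set s : ℕ := ρ.den with hsdef
    have hs1 : 1 ≤ s := ρ.den_pos
    set E : ℝ[X] := q.eraseLead with hE
    set Qr : ℕ → ℝ[X] := fun r =>
      E.comp (C (((s : ℚ) : ℝ)) * X + C (((r : ℕ) : ℚ) : ℝ)) with hQr
    apply prog_tendsto _ (fun n => le_of_eq (norm_ee _)) s hs1
    intro r hrs
    -- pointwise identity
    have hpoint : ∀ m : ℕ, ee (q.eval ((s * m + r : ℕ) : ℝ))
        = ee ((ρ : ℝ) * (r : ℝ) ^ q.natDegree) * ee ((Qr r).eval (m : ℝ)) := by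
      intro m
      obtain ⟨z, hz⟩ := rat_pow_residue ρ q.natDegree m r
      have hqsplit : q.eval ((s * m + r : ℕ) : ℝ)
          = E.eval ((s * m + r : ℕ) : ℝ)
            + (ρ : ℝ) * ((s * m + r : ℕ) : ℝ) ^ q.natDegree := by
        conv_lhs => rw [← Polynomial.eraseLead_add_C_mul_X_pow q]
        rw [Polynomial.eval_add, Polynomial.eval_mul, Polynomial.eval_C,
          Polynomial.eval_pow, Polynomial.eval_X, Polynomial.leadingCoeff, hρ, hE]
      have hQreval : (Qr r).eval (m : ℝ) = E.eval ((s * m + r : ℕ) : ℝ) := by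
        rw [hQr]
        simp only [Polynomial.eval_comp, Polynomial.eval_add, Polynomial.eval_mul,
          Polynomial.eval_C, Polynomial.eval_X]
        congr 1
        push_cast
        ring
      rw [hqsplit, hz, hQreval]
      rw [show E.eval ((s * m + r : ℕ) : ℝ) + ((ρ : ℝ) * (r : ℝ) ^ q.natDegree + z)
          = (E.eval ((s * m + r : ℕ) : ℝ) + (ρ : ℝ) * (r : ℝ) ^ q.natDegree) + z by ring]
      rw [ee_add_int, ee_add, mul_comm]
    -- apply IH to Qr r
    have hQrdeg : (Qr r).natDegree ≤ q.natDegree - 1 := by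
      rw [hQr]
      refine (Polynomial.natDegree_comp_le).trans ?_
      have hlin : (C (((s : ℚ) : ℝ)) * X + C (((r : ℕ) : ℚ) : ℝ)).natDegree = 1 := by
        apply Polynomial.natDegree_linear
        have : ((s : ℚ) : ℝ) ≠ 0 := by
          push_cast
          positivity
        exact this
      rw [hlin, mul_one]
      exact (Polynomial.eraseLead_natDegree_le q).trans (by omega)
    have hEirr : ∃ k', 1 ≤ k' ∧ Irrational (E.coeff k') := by
      refine ⟨k, hk1, ?_⟩
      rw [hE, Polynomial.eraseLead_coeff_of_ne k hkD]
      exact hkirr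
    have hQrirr : ∃ k', 1 ≤ k' ∧ Irrational ((Qr r).coeff k') := by
      rw [hQr]
      exact irrational_coeff_comp E (s : ℚ) ((r : ℕ) : ℚ)
        (by exact_mod_cast Nat.pos_iff_ne_zero.1 hs1) hEirr
    have hIH := IH (q.natDegree - 1) (by omega) (Qr r) hQrdeg hQrirr
    have : Tendsto (fun M : ℕ => ee ((ρ : ℝ) * (r : ℝ) ^ q.natDegree) *
        ((M : ℂ)⁻¹ * ∑ m ∈ Finset.range M, ee ((Qr r).eval (m : ℝ))))
        atTop (nhds 0) := by
      have := hIH.const_mul (ee ((ρ : ℝ) * (r : ℝ) ^ q.natDegree))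
      simpa using this
    refine this.congr fun M => ?_
    rw [← mul_assoc, mul_comm (ee _) ((M:ℂ)⁻¹), mul_assoc, Finset.mul_sum]
    congr 1
    exact Finset.sum_congr rfl fun m _ => (hpoint m).symm

end WeylAux

open WeylAux in
theorem weyl_equidistribution_exponential_sums
    (p : ℝ[X]) (hp : ∃ k, 1 ≤ k ∧ Irrational (p.coeff k)) :
    ∀ h : ℤ, h ≠ 0 →
      Tendsto (fun N : ℕ => (N : ℂ)⁻¹ *
          ∑ n ∈ Finset.Icc 1 N,
            Complex.exp (2 * Real.pi * Complex.I * ((h : ℝ) * p.eval (n : ℝ) : ℝ)))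
        atTop (nhds 0) := by
  intro h hh
  set q : ℝ[X] := C ((h : ℤ) : ℝ) * p with hq
  have hqirr : ∃ k, 1 ≤ k ∧ Irrational (q.coeff k) := by
    obtain ⟨k, hk1, hkirr⟩ := hp
    refine ⟨k, hk1, ?_⟩
    rw [hq, Polynomial.coeff_C_mul]
    exact hkirr.intCast_mul hh
  set Q : ℝ[X] := q.comp (C ((1 : ℚ) : ℝ) * X + C ((1 : ℚ) : ℝ)) with hQ
  have hQirr : ∃ k, 1 ≤ k ∧ Irrational (Q.coeff k) :=
    irrational_coeff_comp q 1 1 one_ne_zero hqirr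
  have hmain := main_induction Q.natDegree Q le_rfl hQirr
  refine hmain.congr fun N => ?_
  congr 1
  have hIcc : ∑ n ∈ Finset.Icc 1 N,
      Complex.exp (2 * Real.pi * Complex.I * ((h : ℝ) * p.eval (n : ℝ) : ℝ))
      = ∑ n ∈ Finset.range N,
        Complex.exp (2 * Real.pi * Complex.I * ((h : ℝ) * p.eval ((1 + n : ℕ) : ℝ) : ℝ)) := by
    rw [show Finset.Icc 1 N = Finset.Ico 1 (N + 1) by rw [Finset.Ico_add_one_right_eq_Icc],
      Finset.sum_Ico_eq_sum_range]
    simp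
  rw [hIcc]
  refine Finset.sum_congr rfl fun n _ => ?_
  have hQeval : Q.eval (n : ℝ) = ((h : ℤ) : ℝ) * p.eval ((1 + n : ℕ) : ℝ) := by
    rw [hQ, Polynomial.eval_comp]
    simp only [Polynomial.eval_add, Polynomial.eval_mul, Polynomial.eval_C,
      Polynomial.eval_X, hq]
    push_cast
    ring_nf
  rw [ee, hQeval]
end

section
/- Let a(n) be a bounded sequence of nonnegative reals and c ∈ ℝ. Suppose that lim_{N−M→∞} (1/(N−M)) Σ_{n=M}^{N−1} a(n) ≥ c, in the sense that for every δ > 0 there is N₀ such that for all M < N with N − M ≥ N₀ the average over [M, N) is at least c − δ. Then for every ε > 0 the set {n ∈ ℕ : a(n) ≥ c − ε} is syndetic. -/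
theorem syndetic_of_uniform_cesaro_lower_bound
    (a : ℕ → ℝ) (h0 : ∀ n, 0 ≤ a n) (B : ℝ) (hB : ∀ n, a n ≤ B) (c : ℝ)
    (h : ∀ δ > (0 : ℝ), ∃ N₀ : ℕ, ∀ M N : ℕ, M < N → N₀ ≤ N - M →
      c - δ ≤ (∑ n ∈ Finset.Ico M N, a n) / ((N : ℝ) - M)) :
    ∀ ε > (0 : ℝ), Syndetic {n : ℕ | c - ε ≤ a n} := by
  intro ε hε
  obtain ⟨N₀, hN₀⟩ := h (ε / 2) (by linarith)
  refine ⟨N₀, Filter.Eventually.of_forall fun x => ?_⟩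
  by_contra hcon
  push_neg at hcon
  have key : ∀ n ∈ Finset.Ico x (x + N₀ + 1), a n < c - ε := by
    intro n hn
    rw [Finset.mem_Ico] at hn
    by_contra h'
    push_neg at h'
    exact absurd (hcon n h' hn.1) (by omega)
  have h1 := hN₀ x (x + N₀ + 1) (by omega) (by omega)
  have hne : (Finset.Ico x (x + N₀ + 1)).Nonempty := by
    rw [Finset.nonempty_Ico]; omega
  have h2 : ∑ n ∈ Finset.Ico x (x + N₀ + 1), a n <
      ((N₀ : ℝ) + 1) * (c - ε) := by
    calc ∑ n ∈ Finset.Ico x (x + N₀ + 1), a n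
        < ∑ _n ∈ Finset.Ico x (x + N₀ + 1), (c - ε) :=
          Finset.sum_lt_sum_of_nonempty hne key
      _ = ((N₀ : ℝ) + 1) * (c - ε) := by
          rw [Finset.sum_const, Nat.card_Ico]
          have hc : x + N₀ + 1 - x = N₀ + 1 := by omega
          rw [hc]
          push_cast
          ring
  have hcast : ((x + N₀ + 1 : ℕ) : ℝ) - (x : ℝ) = (N₀ : ℝ) + 1 := by
    push_cast; ring
  rw [hcast, le_div_iff₀ (by positivity)] at h1
  have hpos : (0 : ℝ) < (N₀ : ℝ) + 1 := by positivity
  nlinarith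
end

section
/- Let X = 𝕋^m, let α ∈ ℝ be irrational, and let p₀ ∈ ℤ[t] with deg p₀ ≥ 1, and let q̃ ∈ ℝ[t]^m, β₁ ∈ ℝ^m, β₂ ∈ ℝ^l, p̃ ∈ ℝ[t]^l with deg(β₂·p̃) < deg p₀. Then the real polynomial φ(t) = p₀(t)·α + p₀(t)²·(β₁·q̃(t)) + β₂·p̃(t) has at least one irrational coefficient in a degree ≥ 1 term, and consequently (1/N) Σ_{n=1}^{N} e(c + φ(n)) → 0 as N → ∞ for any constant c ∈ ℝ. -/
open Polynomial Filter Finset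

noncomputable section AuxWeyl

/-- e(x) = exp(2πix) -/
def ee (x : ℝ) : ℂ := Complex.exp (2 * (Real.pi:ℂ) * Complex.I * x)

lemma ee_add (x y : ℝ) : ee (x + y) = ee x * ee y := by
  rw [ee, ee, ee, ← Complex.exp_add]
  congr 1
  push_cast
  ring

lemma norm_ee (x : ℝ) : ‖ee x‖ = 1 := by
  rw [ee, Complex.norm_exp]
  have : (2 * (Real.pi:ℂ) * Complex.I * x).re = 0 := by simp
  rw [this, Real.exp_zero]

lemma conj_ee (x : ℝ) : (starRingEnd ℂ) (ee x) = ee (-x) := by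
  rw [ee, ee, ← Complex.exp_conj]
  congr 1
  simp only [map_mul, Complex.conj_I, Complex.conj_ofReal, map_ofNat]
  push_cast
  ring

lemma ee_int (z : ℤ) : ee (z : ℝ) = 1 := by
  rw [ee]
  have : 2 * (Real.pi:ℂ) * Complex.I * ((z:ℝ):ℂ) = (z:ℂ) * (2 * Real.pi * Complex.I) := by
    push_cast; ring
  rw [this]
  exact Complex.exp_int_mul_two_pi_mul_I z

lemma ee_eq_one_iff_int (x : ℝ) : ee x = 1 ↔ ∃ z : ℤ, x = z := by
  constructor
  · intro h
    rw [ee, Complex.exp_eq_one_iff] at h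
    obtain ⟨n, hn⟩ := h
    refine ⟨n, ?_⟩
    have hπ : (Real.pi:ℂ) ≠ 0 := by exact_mod_cast Real.pi_ne_zero
    have h2 : (2 * (Real.pi:ℂ) * Complex.I) ≠ 0 := by
      simp [Complex.I_ne_zero, hπ]
    have hx : (x:ℂ) * (2 * (Real.pi:ℂ) * Complex.I) = (n:ℂ) * (2 * (Real.pi:ℂ) * Complex.I) := by
      rw [← hn]; ring
    have : ((x:ℂ)) = (n:ℂ) := mul_right_cancel₀ h2 hx
    exact_mod_cast this
  · rintro ⟨z, rfl⟩; exact ee_int z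

lemma ee_pow (x : ℝ) (n : ℕ) : ee x ^ n = ee (n * x) := by
  rw [ee, ee, ← Complex.exp_nat_mul]
  congr 1
  push_cast; ring

/-- partial sums -/
def TT (u : ℕ → ℂ) (N : ℕ) : ℂ := ∑ n ∈ Finset.range N, u n

/-- averages -/
def AA (u : ℕ → ℂ) (N : ℕ) : ℂ := (N:ℂ)⁻¹ * TT u N

lemma norm_AA (u : ℕ → ℂ) (N : ℕ) : ‖AA u N‖ = ‖TT u N‖ / N := by
  rw [AA, norm_mul, norm_inv, Complex.norm_natCast, div_eq_inv_mul]

lemma norm_TT_le (u : ℕ → ℂ) (hu : ∀ n, ‖u n‖ ≤ 1) (N : ℕ) : ‖TT u N‖ ≤ N := by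
  calc ‖TT u N‖ ≤ ∑ n ∈ Finset.range N, ‖u n‖ := norm_sum_le _ _
    _ ≤ ∑ _n ∈ Finset.range N, 1 := Finset.sum_le_sum (fun i _ => hu i)
    _ = N := by simp

lemma TT_add (u : ℕ → ℂ) (M K : ℕ) :
    TT u (M + K) = TT u M + ∑ i ∈ Finset.range K, u (M + i) :=
  Finset.sum_range_add u M K

lemma norm_TT_sub (u : ℕ → ℂ) (hu : ∀ n, ‖u n‖ ≤ 1) (M K : ℕ) :
    ‖TT u (M + K) - TT u M‖ ≤ K := by
  rw [TT_add, add_sub_cancel_left]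
  calc ‖∑ i ∈ Finset.range K, u (M + i)‖ ≤ ∑ i ∈ Finset.range K, ‖u (M+i)‖ := norm_sum_le _ _
    _ ≤ ∑ _i ∈ Finset.range K, 1 := Finset.sum_le_sum (fun i _ => hu _)
    _ = K := by simp

lemma AA_const_mul (c : ℂ) (u : ℕ → ℂ) (N : ℕ) :
    AA (fun n => c * u n) N = c * AA u N := by
  simp only [AA, TT, Finset.mul_sum]
  exact Finset.sum_congr rfl (fun i _ => by ring)

lemma vdc (u : ℕ → ℂ) (hu : ∀ n, ‖u n‖ ≤ 1)
    (hd : ∀ δ : ℕ, 1 ≤ δ →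
      Tendsto (AA (fun n => u (n+δ) * (starRingEnd ℂ) (u n))) atTop (nhds 0)) :
    Tendsto (AA u) atTop (nhds 0) := by
  rw [NormedAddCommGroup.tendsto_nhds_zero]
  intro ε hε
  -- choose H
  obtain ⟨H₀, hH₀⟩ := exists_nat_gt (1/ε^2)
  set H : ℕ := max H₀ 1 with hHdef
  have hH1 : 1 ≤ H := le_max_right _ _
  have hHr1 : (1:ℝ) ≤ (H:ℝ) := by exact_mod_cast hH1
  have hHpos : (0:ℝ) < H := by linarith
  have hsqrt : Real.sqrt (1/H) < ε := by
    have h1 : (1/ε^2) < (H:ℝ) := lt_of_lt_of_le hH₀ (by exact_mod_cast le_max_left H₀ 1)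
    have h2 : 1/(H:ℝ) < ε^2 := by
      rw [div_lt_iff₀ (by positivity : (0:ℝ) < ε^2)] at h1
      rw [div_lt_iff₀ hHpos]
      nlinarith
    calc Real.sqrt (1/H) < Real.sqrt (ε^2) := Real.sqrt_lt_sqrt (by positivity) h2
      _ = ε := Real.sqrt_sq hε.le
  set w : ℕ → ℕ → ℂ := fun δ n => u (n+δ) * (starRingEnd ℂ) (u n) with hwdef
  have hw : ∀ δ n, ‖w δ n‖ ≤ 1 := by
    intro δ n
    rw [hwdef]
    simp only [norm_mul, RCLike.norm_conj]
    calc ‖u (n+δ)‖ * ‖u n‖ ≤ 1 * 1 := by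
          apply mul_le_mul (hu _) (hu _) (norm_nonneg _) zero_le_one
      _ = 1 := by ring
  set g : ℕ → ℝ := fun N =>
    Real.sqrt (1/H + (∑ δ ∈ Finset.Icc 1 (H-1), ‖AA (w δ) N‖) + 2*H/N) + 2*H/N with hgdef
  -- the limit of g
  have hg : Tendsto g atTop (nhds (Real.sqrt (1/H + 0 + 0) + 0)) := by
    apply Tendsto.add
    · apply Filter.Tendsto.sqrt
      apply Tendsto.add
      apply Tendsto.add
      · exact tendsto_const_nhds
      · have : Tendsto (fun x => ∑ δ ∈ Finset.Icc 1 (H-1), ‖AA (w δ) x‖) atTop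
            (nhds (∑ δ ∈ Finset.Icc 1 (H-1), (0:ℝ))) := by
          apply tendsto_finset_sum
          intro δ hδ
          have h0 := (hd δ (Finset.mem_Icc.mp hδ).1).norm
          simpa using h0
        simpa using this
      · simpa using tendsto_const_div_atTop_nhds_zero_nat (2*(H:ℝ))
    · simpa using tendsto_const_div_atTop_nhds_zero_nat (2*(H:ℝ))
  have hglim : Real.sqrt (1/H + 0 + 0) + 0 < ε := by simpa using hsqrt
  have hgev : ∀ᶠ N in atTop, g N < ε := hg.eventually_lt_const hglim
  -- main inequality
  have main : ∀ N : ℕ, 1 ≤ N → ‖AA u N‖ ≤ g N := by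
    intro N hN
    have hNr : (1:ℝ) ≤ (N:ℝ) := by exact_mod_cast hN
    have hNpos : (0:ℝ) < N := by linarith
    set v : ℕ → ℂ := fun n => ∑ h ∈ Finset.range H, u (n+h) with hvdef
    set V : ℂ := ∑ n ∈ Finset.range N, v n with hVdef
    set E : ℝ := ∑ δ ∈ Finset.Icc 1 (H-1), ‖TT (w δ) N‖ with hEdef
    have hEnn : 0 ≤ E := Finset.sum_nonneg (fun _ _ => norm_nonneg _)
    -- Step 1
    have step1 : (H:ℝ) * ‖TT u N‖ ≤ ‖V‖ + 2*H^2 := by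
      have hVeq : V = ∑ h ∈ Finset.range H, (TT u (h+N) - TT u h) := by
        rw [hVdef]
        rw [Finset.sum_comm]
        apply Finset.sum_congr rfl
        intro h _
        rw [TT_add]
        simp only [add_sub_cancel_left]
        apply Finset.sum_congr rfl
        intro n _
        rw [add_comm h n]
      have key : (H:ℂ) * TT u N - V = ∑ h ∈ Finset.range H, (TT u N - (TT u (h+N) - TT u h)) := by
        rw [hVeq, Finset.sum_sub_distrib]
        simp [Finset.sum_const, nsmul_eq_mul]
      have hbound : ‖(H:ℂ) * TT u N - V‖ ≤ 2*H^2 := by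
        rw [key]
        calc ‖∑ h ∈ Finset.range H, (TT u N - (TT u (h+N) - TT u h))‖
            ≤ ∑ h ∈ Finset.range H, ‖TT u N - (TT u (h+N) - TT u h)‖ := norm_sum_le _ _
          _ ≤ ∑ h ∈ Finset.range H, (2*H : ℝ) := by
              apply Finset.sum_le_sum
              intro h hh
              have hhH : (h:ℝ) ≤ H := by
                have := Finset.mem_range.mp hh
                exact_mod_cast this.le
              have e1 : TT u N - (TT u (h+N) - TT u h) = (TT u N - TT u (N+h)) + TT u h := by
                rw [add_comm h N]; ring
              rw [e1]
              calc ‖(TT u N - TT u (N+h)) + TT u h‖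
                  ≤ ‖TT u N - TT u (N+h)‖ + ‖TT u h‖ := norm_add_le _ _
                _ ≤ (h:ℝ) + h := by
                    apply add_le_add
                    · rw [norm_sub_rev]; exact norm_TT_sub u hu N h
                    · exact norm_TT_le u hu h
                _ ≤ 2*H := by linarith
          _ = 2*H^2 := by simp [Finset.sum_const, Finset.card_range]; ring
      have : (H:ℝ) * ‖TT u N‖ = ‖(H:ℂ) * TT u N‖ := by
        rw [norm_mul, Complex.norm_natCast]
      rw [this]
      calc ‖(H:ℂ) * TT u N‖ ≤ ‖V‖ + ‖(H:ℂ) * TT u N - V‖ := by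
            have := norm_add_le V ((H:ℂ) * TT u N - V)
            simpa using this
        _ ≤ ‖V‖ + 2*H^2 := by linarith
    -- Step 2
    have step2 : ‖V‖^2 ≤ (N:ℝ) * ∑ n ∈ Finset.range N, ‖v n‖^2 := by
      have h1 : ‖V‖ ≤ ∑ n ∈ Finset.range N, ‖v n‖ := norm_sum_le _ _
      have h2 : (∑ n ∈ Finset.range N, ‖v n‖)^2 ≤ (N:ℝ) * ∑ n ∈ Finset.range N, ‖v n‖^2 := by
        have := Finset.sum_mul_sq_le_sq_mul_sq (Finset.range N) (fun _ => (1:ℝ)) (fun n => ‖v n‖)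
        simpa [Finset.card_range] using this
      calc ‖V‖^2 ≤ (∑ n ∈ Finset.range N, ‖v n‖)^2 := by
            apply pow_le_pow_left₀ (norm_nonneg _) h1
        _ ≤ _ := h2
    -- Step 3
    set S : ℕ → ℕ → ℂ := fun h h' => ∑ n ∈ Finset.range N, u (n+h) * (starRingEnd ℂ) (u (n+h'))
      with hSdef
    have hSsymm : ∀ h h', S h' h = (starRingEnd ℂ) (S h h') := by
      intro h h'
      rw [hSdef]
      simp only [map_sum, map_mul, RingHomCompTriple.comp_apply, RingHom.id_apply,
        Complex.conj_conj]
      apply Finset.sum_congr rfl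
      intro n _
      simp [mul_comm]
    have hSdiag : ∀ h, ‖S h h‖ ≤ (N:ℝ) := by
      intro h
      calc ‖S h h‖ ≤ ∑ n ∈ Finset.range N, ‖u (n+h) * (starRingEnd ℂ) (u (n+h))‖ :=
            norm_sum_le _ _
        _ ≤ ∑ _n ∈ Finset.range N, 1 := by
            apply Finset.sum_le_sum
            intro n _
            rw [norm_mul, RCLike.norm_conj]
            calc ‖u (n+h)‖ * ‖u (n+h)‖ ≤ 1*1 :=
                mul_le_mul (hu _) (hu _) (norm_nonneg _) zero_le_one
              _ = 1 := by ring
        _ = N := by simp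
    have hSoff' : ∀ h h', h' < h → h < H → ‖S h h'‖ ≤ E + 2*H := by
      intro h h' hlt hhH
      have hδ1 : 1 ≤ h - h' := by omega
      set δ : ℕ := h - h' with hδdef
      have hδmem : δ ∈ Finset.Icc 1 (H-1) := by
        rw [Finset.mem_Icc]
        constructor
        · exact hδ1
        · omega
      have hSrw : S h h' = TT (w δ) (h' + N) - TT (w δ) h' := by
        rw [hSdef, TT_add]
        simp only [add_sub_cancel_left]
        apply Finset.sum_congr rfl
        intro n _
        rw [hwdef]
        have e1 : n + h = h' + n + δ := by omega
        have e2 : n + h' = h' + n := by omega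
        rw [e1, e2]
      have e2 : TT (w δ) (h' + N) - TT (w δ) h'
          = TT (w δ) N + (TT (w δ) (N + h') - TT (w δ) N) - TT (w δ) h' := by
        rw [add_comm h' N]; ring
      have hh'H : (h':ℝ) ≤ H := by
        have : h' < H := lt_trans hlt hhH
        exact_mod_cast this.le
      have hWE : ‖TT (w δ) N‖ ≤ E := by
        rw [hEdef]
        exact Finset.single_le_sum (f := fun i => ‖TT (w i) N‖) (fun i _ => norm_nonneg _) hδmem
      rw [hSrw, e2]
      calc ‖TT (w δ) N + (TT (w δ) (N + h') - TT (w δ) N) - TT (w δ) h'‖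
          ≤ ‖TT (w δ) N + (TT (w δ) (N + h') - TT (w δ) N)‖ + ‖TT (w δ) h'‖ := norm_sub_le _ _
        _ ≤ ‖TT (w δ) N‖ + ‖TT (w δ) (N + h') - TT (w δ) N‖ + ‖TT (w δ) h'‖ := by
            have := norm_add_le (TT (w δ) N) (TT (w δ) (N + h') - TT (w δ) N)
            linarith
        _ ≤ E + (h':ℝ) + (h':ℝ) := by
            have b1 := norm_TT_sub (w δ) (hw δ) N h'
            have b2 := norm_TT_le (w δ) (hw δ) h'
            linarith
        _ ≤ E + 2*H := by linarith
    have hSoff : ∀ h h', h ≠ h' → h < H → h' < H → ‖S h h'‖ ≤ E + 2*H := by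
      intro h h' hne hh hh'
      rcases lt_or_gt_of_ne hne with hlt | hgt
      · rw [← RCLike.norm_conj (S h h'), ← hSsymm]
        exact hSoff' h' h hlt hh'
      · exact hSoff' h h' hgt hh
    have step3 : ∑ n ∈ Finset.range N, ‖v n‖^2 ≤ H*N + H^2*(E + 2*H) := by
      have hmc : ∀ n, (v n) * (starRingEnd ℂ) (v n) = ((‖v n‖^2 : ℝ) : ℂ) := by
        intro n
        rw [Complex.mul_conj]
        norm_cast
        rw [Complex.normSq_eq_norm_sq]
      have expand : ∀ n, (v n) * (starRingEnd ℂ) (v n)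
          = ∑ h ∈ Finset.range H, ∑ h' ∈ Finset.range H,
            u (n+h) * (starRingEnd ℂ) (u (n+h')) := by
        intro n
        rw [hvdef]
        simp only [map_sum]
        rw [Finset.sum_mul_sum]
      have key1 : ((∑ n ∈ Finset.range N, ‖v n‖^2 : ℝ) : ℂ)
          = ∑ h ∈ Finset.range H, ∑ h' ∈ Finset.range H, S h h' := by
        calc ((∑ n ∈ Finset.range N, ‖v n‖^2 : ℝ) : ℂ)
            = ∑ n ∈ Finset.range N, ((‖v n‖^2 : ℝ) : ℂ) := by push_cast; rfl
          _ = ∑ n ∈ Finset.range N, (v n) * (starRingEnd ℂ) (v n) :=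
              Finset.sum_congr rfl (fun n _ => (hmc n).symm)
          _ = ∑ n ∈ Finset.range N, ∑ h ∈ Finset.range H, ∑ h' ∈ Finset.range H,
              u (n+h) * (starRingEnd ℂ) (u (n+h')) :=
              Finset.sum_congr rfl (fun n _ => expand n)
          _ = ∑ h ∈ Finset.range H, ∑ n ∈ Finset.range N, ∑ h' ∈ Finset.range H,
              u (n+h) * (starRingEnd ℂ) (u (n+h')) := Finset.sum_comm
          _ = ∑ h ∈ Finset.range H, ∑ h' ∈ Finset.range H, S h h' := by
              apply Finset.sum_congr rfl
              intro h _
              rw [Finset.sum_comm]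
      have hnonneg : (0:ℝ) ≤ ∑ n ∈ Finset.range N, ‖v n‖^2 :=
        Finset.sum_nonneg (fun n _ => by positivity)
      have hnorm : ∑ n ∈ Finset.range N, ‖v n‖^2
          = ‖∑ h ∈ Finset.range H, ∑ h' ∈ Finset.range H, S h h'‖ := by
        rw [← key1, Complex.norm_real, Real.norm_eq_abs, abs_of_nonneg hnonneg]
      rw [hnorm]
      calc ‖∑ h ∈ Finset.range H, ∑ h' ∈ Finset.range H, S h h'‖
          ≤ ∑ h ∈ Finset.range H, ∑ h' ∈ Finset.range H, ‖S h h'‖ := by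
            refine (norm_sum_le _ _).trans (Finset.sum_le_sum (fun h _ => norm_sum_le _ _))
        _ ≤ ∑ h ∈ Finset.range H, ∑ h' ∈ Finset.range H,
            ((if h = h' then (N:ℝ) else 0) + (E + 2*H)) := by
            apply Finset.sum_le_sum
            intro h hh
            apply Finset.sum_le_sum
            intro h' hh'
            by_cases hcase : h = h'
            · subst hcase
              rw [if_pos rfl]
              have := hSdiag h
              linarith
            · simp only [if_neg hcase]
              have := hSoff h h' hcase (Finset.mem_range.mp hh) (Finset.mem_range.mp hh')
              linarith
        _ = H*N + H^2*(E + 2*H) := by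
            have hrow : ∀ h ∈ Finset.range H, ∑ h' ∈ Finset.range H,
                ((if h = h' then (N:ℝ) else 0) + (E + 2*H)) = (N:ℝ) + H*(E+2*H) := by
              intro h hh
              rw [Finset.sum_add_distrib, Finset.sum_ite_eq, if_pos hh, Finset.sum_const,
                Finset.card_range, nsmul_eq_mul]
            rw [Finset.sum_congr rfl hrow, Finset.sum_const, Finset.card_range, nsmul_eq_mul]
            ring
    -- combine
    have hH0 : (H:ℝ) ≠ 0 := ne_of_gt hHpos
    have hN0 : (N:ℝ) ≠ 0 := ne_of_gt hNpos
    have hEsum : ∑ δ ∈ Finset.Icc 1 (H-1), ‖AA (w δ) N‖ = E / N := by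
      rw [hEdef, Finset.sum_div]
      exact Finset.sum_congr rfl (fun δ _ => norm_AA _ _)
    have c1 : ‖AA u N‖ ≤ (‖V‖ + 2*H^2)/((H:ℝ)*N) := by
      rw [norm_AA, div_le_div_iff₀ hNpos (by positivity)]
      nlinarith [step1, norm_nonneg (TT u N), hNpos]
    have c2 : (‖V‖ + 2*(H:ℝ)^2)/((H:ℝ)*N) = ‖V‖/((H:ℝ)*N) + 2*H/N := by
      field_simp
    have c3 : ‖V‖/((H:ℝ)*N) ≤ Real.sqrt (1/H + E/N + 2*H/N) := by
      have hV2 : ‖V‖^2 ≤ (N:ℝ) * ((H:ℝ)*N + H^2*(E+2*H)) := by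
        have := mul_le_mul_of_nonneg_left step3 (le_of_lt hNpos)
        linarith [step2]
      have hVle : ‖V‖ ≤ Real.sqrt ((N:ℝ) * ((H:ℝ)*N + H^2*(E+2*H))) := by
        rw [← Real.sqrt_sq (norm_nonneg V)]
        exact Real.sqrt_le_sqrt hV2
      have hsd : Real.sqrt ((N:ℝ) * ((H:ℝ)*N + H^2*(E+2*H)) / ((H:ℝ)*N)^2)
          = Real.sqrt ((N:ℝ) * ((H:ℝ)*N + H^2*(E+2*H))) / ((H:ℝ)*N) := by
        rw [Real.sqrt_div (by positivity), Real.sqrt_sq (by positivity)]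
      have harg : (N:ℝ) * ((H:ℝ)*N + H^2*(E+2*H)) / ((H:ℝ)*N)^2 = 1/H + E/N + 2*H/N := by
        field_simp
        ring
      calc ‖V‖/((H:ℝ)*N) ≤ Real.sqrt ((N:ℝ) * ((H:ℝ)*N + H^2*(E+2*H)))/((H:ℝ)*N) := by
            gcongr
        _ = Real.sqrt ((N:ℝ) * ((H:ℝ)*N + H^2*(E+2*H)) / ((H:ℝ)*N)^2) := hsd.symm
        _ = Real.sqrt (1/H + E/N + 2*H/N) := by rw [harg]
    have : ‖AA u N‖ ≤ Real.sqrt (1/H + E/N + 2*H/N) + 2*H/N := by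
      calc ‖AA u N‖ ≤ (‖V‖ + 2*(H:ℝ)^2)/((H:ℝ)*N) := c1
        _ = ‖V‖/((H:ℝ)*N) + 2*H/N := c2
        _ ≤ Real.sqrt (1/H + E/N + 2*H/N) + 2*H/N := by linarith [c3]
    rw [hgdef]
    dsimp only
    rw [hEsum]
    exact this
  filter_upwards [hgev, eventually_ge_atTop 1] with N h1 h2
  exact lt_of_le_of_lt (main N h2) h1


lemma irr_ne_zero {x : ℝ} (h : Irrational x) : x ≠ 0 := by
  rintro rfl
  exact h ⟨0, by norm_num⟩

lemma hasseDeriv_natDegree_eq (f : ℝ[X]) :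
    Polynomial.hasseDeriv f.natDegree f = Polynomial.C (f.coeff f.natDegree) := by
  ext n
  rw [Polynomial.hasseDeriv_coeff, Polynomial.coeff_C]
  cases n with
  | zero => simp
  | succ m =>
    rw [if_neg (by omega)]
    have h : f.natDegree < m + 1 + f.natDegree := by omega
    rw [Polynomial.coeff_eq_zero_of_natDegree_lt h, mul_zero]

lemma hasseDeriv_pred_eval (f : ℝ[X]) (d : ℕ) (hd : f.natDegree = d + 1) (r : ℝ) :
    (Polynomial.hasseDeriv d f).eval r = f.coeff d + (d+1) * f.coeff (d+1) * r := by
  have key : Polynomial.hasseDeriv d f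
      = Polynomial.C (f.coeff d) + Polynomial.C ((d+1) * f.coeff (d+1)) * Polynomial.X := by
    ext n
    rw [Polynomial.hasseDeriv_coeff]
    match n with
    | 0 => simp
    | 1 =>
      have h1 : (1 + d).choose d = d + 1 := by
        rw [add_comm]
        exact Nat.choose_succ_self_right d
      have hrhs : (Polynomial.C (f.coeff d)
          + Polynomial.C ((d+1) * f.coeff (d+1)) * Polynomial.X).coeff 1
          = ((d:ℝ)+1) * f.coeff (d+1) := by
        rw [Polynomial.coeff_add, Polynomial.coeff_C, Polynomial.coeff_C_mul,
          Polynomial.coeff_X_one]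
        simp
      rw [hrhs, h1, add_comm 1 d]
      push_cast
      ring
    | (m+2) =>
      have h2 : f.natDegree < m + 2 + d := by omega
      rw [Polynomial.coeff_eq_zero_of_natDegree_lt h2, mul_zero]
      have : (Polynomial.C (f.coeff d)
          + Polynomial.C ((d+1) * f.coeff (d+1)) * Polynomial.X).coeff (m+2) = 0 := by
        rw [Polynomial.coeff_add, Polynomial.coeff_C, Polynomial.coeff_C_mul,
          Polynomial.coeff_X]
        simp
      rw [this]
  rw [key]
  simp [Polynomial.eval_add, Polynomial.eval_C]

lemma weyl_lead (d : ℕ) (hd : 1 ≤ d) : ∀ P : ℝ[X], P.natDegree = d → Irrational (P.coeff d) →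
    Tendsto (AA (fun n => ee (P.eval (n:ℕ)))) atTop (nhds 0) := by
  induction d, hd using Nat.le_induction with
  | base =>
    intro P hP hirr
    have heval : ∀ n : ℕ, P.eval (n:ℝ) = P.coeff 0 + P.coeff 1 * n := by
      intro n
      rw [Polynomial.eval_eq_sum_range, hP]
      simp [Finset.sum_range_succ]
    set z := ee (P.coeff 1) with hzdef
    have hz : z ≠ 1 := by
      intro h
      rw [hzdef, ee_eq_one_iff_int] at h
      obtain ⟨k, hk⟩ := h
      exact hirr.ne_int k hk
    have hz1 : (0:ℝ) < ‖z - 1‖ := by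
      rw [norm_pos_iff]
      exact sub_ne_zero_of_ne hz
    have hTTbound : ∀ N, ‖TT (fun n => ee (P.eval (n:ℕ))) N‖ ≤ 2/‖z-1‖ := by
      intro N
      have hterm : ∀ n : ℕ, ee (P.eval (n:ℕ)) = ee (P.coeff 0) * z ^ n := by
        intro n
        rw [heval n, ee_add, hzdef, ee_pow]
        ring_nf
      have : TT (fun n => ee (P.eval (n:ℕ))) N = ee (P.coeff 0) * ((z^N - 1)/(z-1)) := by
        rw [TT, Finset.sum_congr rfl (fun n _ => hterm n), ← Finset.mul_sum, geom_sum_eq hz]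
      rw [this, norm_mul, norm_ee, one_mul, norm_div]
      gcongr
      calc ‖z^N - 1‖ ≤ ‖z^N‖ + 1 := by
            have := norm_sub_le (z^N) (1:ℂ)
            simpa using this
        _ = 2 := by rw [norm_pow, hzdef, norm_ee]; norm_num
    have hb : ∀ N : ℕ, ‖AA (fun n => ee (P.eval (n:ℕ))) N‖ ≤ (2/‖z-1‖)/N := by
      intro N
      rw [norm_AA]
      rcases Nat.eq_zero_or_pos N with rfl | hN
      · simp
      · have hNr : (0:ℝ) < N := by exact_mod_cast hN
        gcongr
        exact hTTbound N
    exact squeeze_zero_norm hb (tendsto_const_div_atTop_nhds_zero_nat (2/‖z-1‖))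
  | succ d hd1 ih =>
    intro P hP hirr
    apply vdc _ (fun n => le_of_eq (norm_ee _))
    intro δ hδ
    set ψ : Polynomial ℝ := (Polynomial.taylor (δ:ℝ) P) - P with hψdef
    have hcoeff : ∀ k, ψ.coeff k = ((Polynomial.taylor (δ:ℝ)) P).coeff k - P.coeff k := by
      intro k
      rw [hψdef, Polynomial.coeff_sub]
    have htop : ψ.coeff (d+1) = 0 := by
      rw [hcoeff, Polynomial.taylor_coeff, ← hP, hasseDeriv_natDegree_eq, Polynomial.eval_C,
        sub_self]
    have habove : ∀ m, d < m → ψ.coeff m = 0 := by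
      intro m hm
      rcases Nat.lt_or_ge m (d+2) with h1 | h1
      · have : m = d + 1 := by omega
        rw [this]; exact htop
      · rw [hcoeff]
        have hta : ((Polynomial.taylor (δ:ℝ)) P).natDegree < m := by
          rw [Polynomial.natDegree_taylor, hP]; omega
        have hpa : P.natDegree < m := by rw [hP]; omega
        rw [Polynomial.coeff_eq_zero_of_natDegree_lt hta,
          Polynomial.coeff_eq_zero_of_natDegree_lt hpa, sub_zero]
    have hψd : ψ.coeff d = ((d:ℝ)+1) * δ * P.coeff (d+1) := by
      rw [hcoeff, Polynomial.taylor_coeff, hasseDeriv_pred_eval P d hP]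
      ring
    have hψirr : Irrational (ψ.coeff d) := by
      rw [hψd]
      have hq : (((d+1) * δ : ℕ) : ℚ) ≠ 0 := by
        have : (d+1) * δ ≠ 0 := by positivity
        exact_mod_cast this
      have := hirr.ratCast_mul hq
      convert this using 1
      push_cast
      ring
    have hψdeg : ψ.natDegree = d := by
      apply le_antisymm
      · exact Polynomial.natDegree_le_iff_coeff_eq_zero.mpr habove
      · exact Polynomial.le_natDegree_of_ne_zero (irr_ne_zero hψirr)
    have heq : (fun n : ℕ => ee (P.eval ((n + δ : ℕ):ℝ)) * (starRingEnd ℂ) (ee (P.eval (n:ℕ))))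
        = fun n : ℕ => ee (ψ.eval (n:ℕ)) := by
      funext n
      rw [conj_ee, ← ee_add]
      congr 1
      rw [hψdef, Polynomial.eval_sub, Polynomial.taylor_eval]
      push_cast
      ring
    have hlim := ih ψ hψdeg hψirr
    have heq2 : AA (fun n : ℕ => ee (P.eval ((n + δ : ℕ):ℝ)) * (starRingEnd ℂ) (ee (P.eval (n:ℕ))))
        = AA (fun n : ℕ => ee (ψ.eval (n:ℕ))) := by rw [heq]
    rw [heq2]
    exact hlim


lemma tendsto_div_const_atTop (q : ℕ) (hq : 1 ≤ q) :
    Tendsto (fun N : ℕ => N / q) atTop atTop := by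
  apply Filter.tendsto_atTop.mpr
  intro b
  filter_upwards [eventually_ge_atTop (b * q)] with N hN
  exact (Nat.le_div_iff_mul_le hq).mpr hN

lemma TT_mul_split (u : ℕ → ℂ) (q M : ℕ) :
    TT u (q * M) = ∑ s ∈ Finset.range q, ∑ m ∈ Finset.range M, u (q * m + s) := by
  induction M with
  | zero => simp [TT]
  | succ M ihM =>
    have h1 : q * (M+1) = q * M + q := by ring
    rw [h1, TT_add, ihM]
    have h2 : ∀ s ∈ Finset.range q, ∑ m ∈ Finset.range (M+1), u (q * m + s)
        = (∑ m ∈ Finset.range M, u (q * m + s)) + u (q * M + s) :=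
      fun s _ => Finset.sum_range_succ _ M
    rw [Finset.sum_congr rfl h2, Finset.sum_add_distrib]

lemma avg_progressions (u : ℕ → ℂ) (hu : ∀ n, ‖u n‖ ≤ 1) (q : ℕ) (hq : 1 ≤ q)
    (h : ∀ s, s < q → Tendsto (AA (fun m => u (q * m + s))) atTop (nhds 0)) :
    Tendsto (AA u) atTop (nhds 0) := by
  have hqr : (0:ℝ) < q := by exact_mod_cast hq
  set g : ℕ → ℝ := fun N =>
    (∑ s ∈ Finset.range q, ‖AA (fun m => u (q*m+s)) (N/q)‖) / q + q / N with hgdef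
  have hg : Tendsto g atTop (nhds ((∑ _s ∈ Finset.range q, (0:ℝ))/q + 0)) := by
    apply Tendsto.add
    · apply Tendsto.div_const
      apply tendsto_finset_sum
      intro s hs
      have := ((h s (Finset.mem_range.mp hs)).norm).comp (tendsto_div_const_atTop q hq)
      rw [norm_zero] at this
      exact this
    · simpa using tendsto_const_div_atTop_nhds_zero_nat (q:ℝ)
  have hg0 : ((∑ _s ∈ Finset.range q, (0:ℝ))/q + 0) = 0 := by simp
  rw [hg0] at hg
  apply squeeze_zero_norm' ?_ hg
  filter_upwards [eventually_ge_atTop q] with N hNq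
  set M := N / q with hM
  have hM1 : 1 ≤ M := (Nat.one_le_div_iff hq).mpr hNq
  have hMr : (1:ℝ) ≤ (M:ℝ) := by exact_mod_cast hM1
  have hqM_le : q * M ≤ N := by
    rw [hM, mul_comm]
    exact Nat.div_mul_le_self N q
  have hqMr : (0:ℝ) < (q:ℝ) * M := by positivity
  have hqMN : ((q:ℝ) * M) ≤ (N:ℝ) := by
    have : ((q * M : ℕ) : ℝ) ≤ (N:ℝ) := by exact_mod_cast hqM_le
    push_cast at this
    linarith
  have hNr : (0:ℝ) < N := lt_of_lt_of_le hqMr hqMN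
  have hsplit : TT u N = TT u (q*M) + ∑ i ∈ Finset.range (N - q*M), u (q*M + i) := by
    have hN' : N = q*M + (N - q*M) := by omega
    conv_lhs => rw [hN']
    exact TT_add u _ _
  have hrem : (N - q*M : ℕ) ≤ q := by
    have h1 : q * M + N % q = N := by rw [hM]; exact Nat.div_add_mod N q
    have h2 : N % q < q := Nat.mod_lt _ hq
    omega
  have hb1 : ‖TT u N‖ ≤ ‖TT u (q*M)‖ + q := by
    rw [hsplit]
    calc ‖TT u (q*M) + ∑ i ∈ Finset.range (N - q*M), u (q*M + i)‖
        ≤ ‖TT u (q*M)‖ + ‖∑ i ∈ Finset.range (N - q*M), u (q*M + i)‖ := norm_add_le _ _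
      _ ≤ ‖TT u (q*M)‖ + (N - q*M : ℕ) := by
          have : ‖∑ i ∈ Finset.range (N - q*M), u (q*M + i)‖ ≤ ((N - q*M : ℕ):ℝ) := by
            calc ‖∑ i ∈ Finset.range (N - q*M), u (q*M + i)‖
                ≤ ∑ i ∈ Finset.range (N - q*M), ‖u (q*M + i)‖ := norm_sum_le _ _
              _ ≤ ∑ _i ∈ Finset.range (N - q*M), 1 := Finset.sum_le_sum (fun i _ => hu _)
              _ = ((N - q*M : ℕ):ℝ) := by simp
          linarith
      _ ≤ ‖TT u (q*M)‖ + q := by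
          have : ((N - q*M : ℕ):ℝ) ≤ (q:ℝ) := by exact_mod_cast hrem
          linarith
  have hb2 : ‖TT u (q*M)‖ ≤ ∑ s ∈ Finset.range q, ‖TT (fun m => u (q*m+s)) M‖ := by
    rw [TT_mul_split]
    exact norm_sum_le _ _
  have hb3 : ∑ s ∈ Finset.range q, ‖TT (fun m => u (q*m+s)) M‖
      = (M:ℝ) * ∑ s ∈ Finset.range q, ‖AA (fun m => u (q*m+s)) M‖ := by
    rw [Finset.mul_sum]
    apply Finset.sum_congr rfl
    intro s _
    rw [norm_AA]
    field_simp
  rw [norm_AA]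
  have hMN : M = N / q := hM
  calc ‖TT u N‖ / N ≤ (‖TT u (q*M)‖ + q) / N := by gcongr
    _ = ‖TT u (q*M)‖/N + q/N := by ring
    _ ≤ ‖TT u (q*M)‖/((q:ℝ)*M) + q/N := by
        gcongr
    _ ≤ ((M:ℝ) * ∑ s ∈ Finset.range q, ‖AA (fun m => u (q*m+s)) M‖)/((q:ℝ)*M) + q/N := by
        gcongr
        calc ‖TT u (q*M)‖ ≤ _ := hb2
          _ = _ := hb3
    _ = (∑ s ∈ Finset.range q, ‖AA (fun m => u (q*m+s)) M‖)/q + q/N := by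
        field_simp
    _ = g N := by rw [hgdef]

lemma weyl_any (P : Polynomial ℝ) (k : ℕ) (hk : 1 ≤ k) (hirr : Irrational (P.coeff k)) :
    Tendsto (AA (fun n => ee (P.eval (n:ℕ)))) atTop (nhds 0) := by
  classical
  set D := P.natDegree with hD
  have hkD : k ≤ D := Polynomial.le_natDegree_of_ne_zero (irr_ne_zero hirr)
  set j := Nat.findGreatest (fun i => Irrational (P.coeff i)) D with hj
  have hjirr : Irrational (P.coeff j) := by
    have := Nat.findGreatest_spec (P := fun i => Irrational (P.coeff i)) hkD hirr
    simpa [hj] using this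
  have hj1 : 1 ≤ j := le_trans hk (Nat.le_findGreatest hkD hirr)
  have hjrat : ∀ i, j < i → ¬ Irrational (P.coeff i) := by
    intro i hi
    rcases le_or_gt i D with h1 | h1
    · exact Nat.findGreatest_is_greatest hi h1
    · rw [Polynomial.coeff_eq_zero_of_natDegree_lt h1]
      exact fun hc => irr_ne_zero hc rfl
  set r : ℕ → ℚ := fun i => if h : ∃ qq : ℚ, (qq:ℝ) = P.coeff i then h.choose else 0 with hr
  have hrspec : ∀ i, j < i → ((r i : ℚ) : ℝ) = P.coeff i := by
    intro i hi
    have h := not_not.mp (hjrat i hi)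
    have h' : ∃ qq : ℚ, (qq:ℝ) = P.coeff i := h
    rw [hr]
    dsimp only
    rw [dif_pos h']
    exact h'.choose_spec
  set q : ℕ := ∏ i ∈ Finset.Ioc j D, (r i).den with hqdef
  have hq1 : 1 ≤ q := by
    rw [Nat.one_le_iff_ne_zero, hqdef]
    rw [Finset.prod_ne_zero_iff]
    exact fun i _ => (r i).den_nz
  set ρ : Polynomial ℝ := ∑ i ∈ Finset.Ioc j D, Polynomial.C (P.coeff i) * Polynomial.X ^ i
    with hρ
  set ψ : Polynomial ℝ := P - ρ with hψ
  have hρcoeff : ∀ m, ρ.coeff m = if m ∈ Finset.Ioc j D then P.coeff m else 0 := by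
    intro m
    rw [hρ, Polynomial.finset_sum_coeff]
    simp only [Polynomial.coeff_C_mul, Polynomial.coeff_X_pow, mul_ite, mul_one, mul_zero]
    rw [Finset.sum_ite_eq (Finset.Ioc j D) m (fun i => P.coeff i)]
  have hψcoeffj : ψ.coeff j = P.coeff j := by
    rw [hψ, Polynomial.coeff_sub, hρcoeff]
    simp [Finset.mem_Ioc]
  have hψirr : Irrational (ψ.coeff j) := hψcoeffj ▸ hjirr
  have hψdeg_le : ψ.natDegree ≤ j := by
    apply Polynomial.natDegree_le_iff_coeff_eq_zero.mpr
    intro m hm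
    rw [hψ, Polynomial.coeff_sub, hρcoeff]
    rcases le_or_gt m D with h1 | h1
    · rw [if_pos (Finset.mem_Ioc.mpr ⟨hm, h1⟩), sub_self]
    · rw [if_neg (fun hc => by exact absurd (Finset.mem_Ioc.mp hc).2 (by omega)),
        Polynomial.coeff_eq_zero_of_natDegree_lt h1, sub_zero]
  have hψdeg : ψ.natDegree = j :=
    le_antisymm hψdeg_le (Polynomial.le_natDegree_of_ne_zero (irr_ne_zero hψirr))
  -- the eval of ρ along a progression changes by an integer
  have hρint : ∀ m s : ℕ, ∃ z : ℤ, ρ.eval ((q*m+s : ℕ):ℝ) = ρ.eval (s:ℝ) + z := by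
    intro m s
    set x : ℝ := ((q*m+s : ℕ):ℝ) with hx
    have key : ∀ i ∈ Finset.Ioc j D, ∃ z : ℤ, P.coeff i * (x^i - (s:ℝ)^i) = z := by
      intro i hi
      have hden : (r i).den ∣ q := Finset.dvd_prod_of_mem _ hi
      obtain ⟨c, hc⟩ := hden
      have hmod : ((q*m+s : ℕ):ℤ)^i ≡ ((s:ℕ):ℤ)^i [ZMOD (q:ℤ)] := by
        apply Int.ModEq.pow
        have hdv : ((q:ℤ)) ∣ ((s:ℕ):ℤ) - ((q*m+s : ℕ):ℤ) := by
          push_cast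
          exact ⟨-m, by ring⟩
        exact Int.modEq_iff_dvd.mpr hdv
      have hdvd : ((q:ℤ)) ∣ ((q*m+s:ℕ):ℤ)^i - ((s:ℕ):ℤ)^i := Int.ModEq.dvd hmod.symm
      obtain ⟨K, hK⟩ := hdvd
      refine ⟨(r i).num * c * K, ?_⟩
      have hcoeffi : P.coeff i = ((r i : ℚ):ℝ) := (hrspec i (Finset.mem_Ioc.mp hi).1).symm
      have hrq : ((r i : ℚ)) * (q:ℚ) = ((r i).num * c : ℤ) := by
        rw [hc]
        push_cast
        rw [← mul_assoc, Rat.mul_den_eq_num]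
      have hxs : x^i - (s:ℝ)^i = ((q:ℝ)) * K := by
        have : (((q*m+s:ℕ):ℤ)^i - ((s:ℕ):ℤ)^i : ℤ) = (q:ℤ) * K := hK
        have h2 : ((((q*m+s:ℕ):ℤ)^i - ((s:ℕ):ℤ)^i : ℤ) : ℝ) = (((q:ℤ) * K : ℤ) : ℝ) := by
          exact_mod_cast congrArg (Int.cast : ℤ → ℝ) this
        push_cast at h2
        rw [hx]
        push_cast
        linarith
      rw [hcoeffi, hxs]
      have : ((r i : ℚ):ℝ) * ((q:ℝ) * K) = (((r i) * (q:ℚ) : ℚ):ℝ) * K := by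
        push_cast
        ring
      rw [this, hrq]
      push_cast
      ring
    choose zf hzf using key
    refine ⟨∑ i ∈ (Finset.Ioc j D).attach, zf i i.2, ?_⟩
    have heval : ∀ y : ℝ, ρ.eval y = ∑ i ∈ Finset.Ioc j D, P.coeff i * y^i := by
      intro y
      rw [hρ, Polynomial.eval_finset_sum]
      apply Finset.sum_congr rfl
      intro i _
      simp
    rw [heval, heval]
    have hsum : ∑ i ∈ Finset.Ioc j D, (P.coeff i * x^i - P.coeff i * (s:ℝ)^i)
        = ((∑ i ∈ (Finset.Ioc j D).attach, zf i i.2 : ℤ) : ℝ) := by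
      rw [← Finset.sum_attach (Finset.Ioc j D)
        (fun i => P.coeff i * x^i - P.coeff i * (s:ℝ)^i)]
      push_cast
      apply Finset.sum_congr rfl
      intro i _
      have h3 := hzf i i.2
      have h4 : P.coeff i * (x ^ (i:ℕ) - (s:ℝ) ^ (i:ℕ)) = ((zf i i.2 : ℤ):ℝ) := h3
      push_cast at h4
      linarith [h4]
    rw [Finset.sum_sub_distrib] at hsum
    linarith [hsum]
  apply avg_progressions _ (fun n => le_of_eq (norm_ee _)) q hq1
  intro s hs
  set χ : Polynomial ℝ := ψ.comp (Polynomial.C (q:ℝ) * Polynomial.X + Polynomial.C (s:ℝ))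
    with hχ
  have hqr0 : (q:ℝ) ≠ 0 := by positivity
  have hlindeg : (Polynomial.C (q:ℝ) * Polynomial.X + Polynomial.C (s:ℝ)).natDegree = 1 :=
    Polynomial.natDegree_linear hqr0
  have hχdeg : χ.natDegree = j := by
    rw [hχ, Polynomial.natDegree_comp, hlindeg, hψdeg, mul_one]
  have hχirr : Irrational (χ.coeff j) := by
    have hlc : χ.leadingCoeff = ψ.coeff j * (q:ℝ)^j := by
      rw [hχ, Polynomial.leadingCoeff_comp (by rw [hlindeg]; omega),
        Polynomial.leadingCoeff_linear hqr0, hψdeg, ← hψdeg, Polynomial.coeff_natDegree]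
    have : χ.coeff j = ψ.coeff j * (q:ℝ)^j := by
      conv_lhs => rw [← hχdeg]
      rw [Polynomial.coeff_natDegree, hlc]
    rw [this]
    have hq' : ((q^j : ℕ) : ℚ) ≠ 0 := by positivity
    have := hψirr.ratCast_mul hq'
    convert this using 1
    push_cast
    ring
  have hmain := weyl_lead j hj1 χ hχdeg hχirr
  have hueq : (fun m : ℕ => ee (P.eval ((q*m+s : ℕ):ℝ)))
      = fun m : ℕ => ee (ρ.eval ((s:ℕ):ℝ)) * ee (χ.eval ((m:ℕ):ℝ)) := by
    funext m
    obtain ⟨z, hz⟩ := hρint m s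
    have hxc : ((q*m+s : ℕ):ℝ) = (q:ℝ) * (m:ℝ) + (s:ℝ) := by push_cast; ring
    have hχm : χ.eval ((m:ℕ):ℝ) = ψ.eval ((q*m+s : ℕ):ℝ) := by
      rw [hχ, Polynomial.eval_comp]
      simp only [Polynomial.eval_add, Polynomial.eval_mul, Polynomial.eval_C, Polynomial.eval_X]
      rw [hxc]
    have hPs : P.eval ((q*m+s:ℕ):ℝ)
        = χ.eval ((m:ℕ):ℝ) + (ρ.eval ((s:ℕ):ℝ) + (z:ℝ)) := by
      rw [hχm, hψ, Polynomial.eval_sub, ← hz]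
      ring
    rw [hPs, ee_add, ee_add, ee_int, mul_one]
    ring
  have hAA : AA (fun m : ℕ => ee (P.eval ((q*m+s : ℕ):ℝ)))
      = fun N => ee (ρ.eval ((s:ℕ):ℝ)) * AA (fun m : ℕ => ee (χ.eval ((m:ℕ):ℝ))) N := by
    rw [hueq]
    exact funext (AA_const_mul _ _)
  rw [show (fun m : ℕ => ee (P.eval ((q*m+s : ℕ):ℝ))) = (fun m => (fun n : ℕ => ee (P.eval (n:ℕ))) (q*m+s)) from rfl] at hAA
  rw [hAA]
  have := hmain.const_mul (ee (ρ.eval ((s:ℕ):ℝ)))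
  simpa using this


lemma not_irrational_sum {ι : Type*} (s : Finset ι) (f : ι → ℝ)
    (h : ∀ i ∈ s, ¬ Irrational (f i)) : ¬ Irrational (∑ i ∈ s, f i) := by
  classical
  have hw : ∀ i ∈ s, ∃ qq : ℚ, (qq:ℝ) = f i := fun i hi => not_not.mp (h i hi)
  choose g hg using hw
  intro hirr
  apply hirr
  refine ⟨∑ i ∈ s.attach, g i i.2, ?_⟩
  push_cast
  rw [← Finset.sum_attach s f]
  exact Finset.sum_congr rfl (fun i _ => hg i i.2)

lemma not_irrational_mul {x y : ℝ} (hx : ¬ Irrational x) (hy : ¬ Irrational y) :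
    ¬ Irrational (x * y) := by
  obtain ⟨p, hp⟩ := not_not.mp hx
  obtain ⟨q, hq⟩ := not_not.mp hy
  intro h
  exact h ⟨p * q, by push_cast; rw [hp, hq]⟩

lemma exists_functional (α : ℝ) (hα : Irrational α) :
    ∃ L : ℝ →ₗ[ℚ] ℚ, L 1 = 0 ∧ L α = 1 := by
  have li : LinearIndependent ℚ ![(1:ℝ), α] := by
    rw [LinearIndependent.pair_iff]
    intro s t hst
    by_cases ht : t = 0
    · subst ht; refine ⟨?_, rfl⟩
      have : (s:ℝ) = 0 := by simpa using hst
      exact_mod_cast this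
    · exfalso
      apply hα
      refine ⟨-s/t, ?_⟩
      have ht' : (t:ℝ) ≠ 0 := by exact_mod_cast ht
      have : (s:ℝ) + t * α = 0 := by simpa [Rat.smul_def] using hst
      push_cast
      field_simp
      linarith
  have li' : LinearIndepOn ℚ id (Set.range ![(1:ℝ), α]) := (linearIndepOn_id_range_iff li.injective).mpr li
  let b := Module.Basis.extend li'
  have hmem : ∀ x ∈ Set.range ![(1:ℝ), α], x ∈ li'.extend (Set.subset_univ _) :=
    fun x hx => li'.subset_extend _ hx
  have h1r : (1:ℝ) ∈ Set.range ![(1:ℝ), α] := ⟨0, rfl⟩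
  have hαr : α ∈ Set.range ![(1:ℝ), α] := ⟨1, rfl⟩
  let i1 : li'.extend (Set.subset_univ _) := ⟨1, hmem _ h1r⟩
  let iα : li'.extend (Set.subset_univ _) := ⟨α, hmem _ hαr⟩
  have hne : i1 ≠ iα := by
    intro h
    apply hα
    exact ⟨1, by simpa using congrArg Subtype.val h⟩
  refine ⟨(b.coord iα).restrictScalars ℚ, ?_, ?_⟩
  · have : b.coord iα (b i1) = 0 := by
      simp [Module.Basis.coord_apply, Module.Basis.repr_self, Finsupp.single_eq_of_ne hne.symm]
    simpa [b, Module.Basis.extend_apply_self] using this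
  · have : b.coord iα (b iα) = 1 := by
      simp [Module.Basis.coord_apply, Module.Basis.repr_self]
    simpa [b, Module.Basis.extend_apply_self] using this

end AuxWeyl

open Complex in
theorem irrational_coeff_and_weyl_vanishing
    (m l : ℕ) (α : ℝ) (hα : Irrational α)
    (p₀ : Polynomial ℤ) (hp₀ : 1 ≤ p₀.natDegree)
    (qt : Fin m → ℝ[X]) (β₁ : Fin m → ℝ)
    (β₂ : Fin l → ℝ) (pt : Fin l → ℝ[X])
    (hdeg : (∑ i, C (β₂ i) * pt i).natDegree <
      (p₀.map (Int.castRingHom ℝ)).natDegree) :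
    (∃ k, 1 ≤ k ∧
      Irrational ((p₀.map (Int.castRingHom ℝ) * C α
        + (p₀.map (Int.castRingHom ℝ)) ^ 2 * (∑ i, C (β₁ i) * qt i)
        + ∑ i, C (β₂ i) * pt i).coeff k)) ∧
    ∀ c : ℝ, Tendsto (fun N : ℕ => (N : ℂ)⁻¹ *
        ∑ n ∈ Finset.Icc 1 N,
          Complex.exp (2 * Real.pi * Complex.I *
            ((c + (p₀.map (Int.castRingHom ℝ) * C α
              + (p₀.map (Int.castRingHom ℝ)) ^ 2 * (∑ i, C (β₁ i) * qt i)
              + ∑ i, C (β₂ i) * pt i).eval (n : ℝ)) : ℝ)))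
      atTop (nhds 0) := by
  classical
  set fR : ℝ[X] := p₀.map (Int.castRingHom ℝ) with hfR
  set Q : ℝ[X] := ∑ i, C (β₁ i) * qt i with hQ
  set R : ℝ[X] := ∑ i, C (β₂ i) * pt i with hR
  set φ : ℝ[X] := fR * C α + fR^2 * Q + R with hφ
  set d : ℕ := p₀.natDegree with hd
  have hp₀ne : p₀ ≠ 0 := by
    intro h
    have h2 := hp₀
    rw [hd, h] at h2
    simp at h2
  have hfRdeg : fR.natDegree = d := by
    rw [hfR, Polynomial.natDegree_map_eq_of_injective Int.cast_injective]
    try exact hd.symm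
  -- Part 1
  have part1 : ∃ k, 1 ≤ k ∧ Irrational (φ.coeff k) := by
    by_contra hno
    push_neg at hno
    obtain ⟨L, hL1, hLα⟩ := exists_functional α hα
    have Lrat : ∀ qq : ℚ, L ((qq:ℝ)) = 0 := by
      intro qq
      rw [← Rat.smul_one_eq_cast, map_smul, hL1, smul_zero]
    have Lsmul : ∀ (qq : ℚ) (x : ℝ), L ((qq:ℝ) * x) = qq * L x := by
      intro qq x
      rw [← Rat.smul_def, map_smul, smul_eq_mul]
    set Lp : ℝ[X] → ℚ[X] := fun P => ∑ j ∈ P.support, Polynomial.C (L (P.coeff j)) * Polynomial.X^j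
      with hLp
    have Lp_coeff : ∀ (P : ℝ[X]) (k : ℕ), (Lp P).coeff k = L (P.coeff k) := by
      intro P k
      rw [hLp]
      dsimp only
      rw [Polynomial.finset_sum_coeff]
      simp only [Polynomial.coeff_C_mul, Polynomial.coeff_X_pow, mul_ite, mul_one, mul_zero]
      rw [Finset.sum_ite_eq P.support k (fun j => L (P.coeff j))]
      by_cases hks : k ∈ P.support
      · rw [if_pos hks]
      · rw [if_neg hks, Polynomial.notMem_support_iff.mp hks, map_zero]
    set f' : ℚ[X] := p₀.map (Int.castRingHom ℚ) with hf'
    have hf'deg : f'.natDegree = d := by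
      rw [hf', Polynomial.natDegree_map_eq_of_injective Int.cast_injective]
      try exact hd.symm
    have hf'ne : f' ≠ 0 := by
      rw [hf']
      exact (Polynomial.map_ne_zero_iff Int.cast_injective).mpr hp₀ne
    have hmapfR : fR = f'.map (Rat.castHom ℝ) := by
      rw [hfR, hf', Polynomial.map_map]
      congr 1
      try exact RingHom.ext (fun z => by simp)
    set G : ℚ[X] := f' + f'^2 * Lp Q + Lp R with hG
    have hGcoeff : ∀ k, G.coeff k = L (φ.coeff k) := by
      intro k
      have hφc : φ.coeff k = fR.coeff k * α + (fR^2 * Q).coeff k + R.coeff k := by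
        rw [hφ, Polynomial.coeff_add, Polynomial.coeff_add, Polynomial.coeff_mul_C]
      have t1 : L (fR.coeff k * α) = f'.coeff k := by
        have h1 : fR.coeff k = (((p₀.coeff k : ℚ)):ℝ) := by
          rw [hfR, Polynomial.coeff_map]
          push_cast
          rfl
        rw [h1, Lsmul, hLα, mul_one, hf', Polynomial.coeff_map]
        rfl
      have t2 : L ((fR^2 * Q).coeff k) = (f'^2 * Lp Q).coeff k := by
        rw [Polynomial.coeff_mul, Polynomial.coeff_mul, map_sum]
        apply Finset.sum_congr rfl
        intro x _
        have h2 : (fR^2).coeff x.1 = (((f'^2).coeff x.1 : ℚ) : ℝ) := by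
          rw [hmapfR, ← Polynomial.map_pow, Polynomial.coeff_map]
          rfl
        rw [h2, Lsmul, Lp_coeff]
      have t3 : L (R.coeff k) = (Lp R).coeff k := (Lp_coeff R k).symm
      rw [hφc, map_add, map_add, t1, t2, t3, hG, Polynomial.coeff_add, Polynomial.coeff_add]
    have hzero : ∀ k, 1 ≤ k → G.coeff k = 0 := by
      intro k hk
      rw [hGcoeff]
      obtain ⟨qq, hqq⟩ := not_not.mp (hno k hk)
      rw [← hqq, Lrat]
    have hRdd : R.natDegree < d := by
      have := hdeg
      rw [hfRdeg] at this
      exact this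
    have hRcoeff0 : ∀ k, d ≤ k → (Lp R).coeff k = 0 := by
      intro k hkd
      have hk : R.natDegree < k := lt_of_lt_of_le hRdd hkd
      rw [Lp_coeff, Polynomial.coeff_eq_zero_of_natDegree_lt hk, map_zero]
    by_cases hLQ : Lp Q = 0
    · have h1 : G.coeff d = f'.coeff d := by
        rw [hG, hLQ, mul_zero, add_zero, Polynomial.coeff_add, hRcoeff0 d le_rfl, add_zero]
      have h2 : f'.coeff d ≠ 0 := by
        rw [← hf'deg, Polynomial.coeff_natDegree]
        exact Polynomial.leadingCoeff_ne_zero.mpr hf'ne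
      exact h2 (h1 ▸ hzero d hp₀)
    · set K : ℕ := (f'^2).natDegree + (Lp Q).natDegree with hK
      have hK2d : (f'^2).natDegree = 2*d := by
        rw [Polynomial.natDegree_pow, hf'deg]
      have hdK : d < K := by
        rw [hK, hK2d]
        omega
      have h1 : G.coeff K = (f'^2).leadingCoeff * (Lp Q).leadingCoeff := by
        rw [hG, Polynomial.coeff_add, Polynomial.coeff_add,
          Polynomial.coeff_eq_zero_of_natDegree_lt (by rw [hf'deg]; exact hdK),
          hRcoeff0 K hdK.le, Polynomial.coeff_mul_degree_add_degree, zero_add, add_zero]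
      have h2 : G.coeff K ≠ 0 := by
        rw [h1]
        exact mul_ne_zero (Polynomial.leadingCoeff_ne_zero.mpr (pow_ne_zero _ hf'ne))
          (Polynomial.leadingCoeff_ne_zero.mpr hLQ)
      exact h2 (hzero K (by omega))
  refine ⟨part1, ?_⟩
  intro c
  set Pc : ℝ[X] := (Polynomial.C c + φ).comp (Polynomial.X + Polynomial.C 1) with hPc
  have hPceval : ∀ x : ℝ, Pc.eval x = c + φ.eval (x+1) := by
    intro x
    rw [hPc, Polynomial.eval_comp]
    simp
  have hPcirr : ∃ k, 1 ≤ k ∧ Irrational (Pc.coeff k) := by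
    by_contra hnone
    push_neg at hnone
    obtain ⟨k0, hk0, hk0irr⟩ := part1
    have hPct : Polynomial.taylor (-1 : ℝ) Pc = Polynomial.C c + φ := by
      rw [hPc, ← Polynomial.taylor_apply, Polynomial.taylor_taylor]
      norm_num
    have hratk : ¬ Irrational (φ.coeff k0) := by
      have h1 : (Polynomial.taylor (-1:ℝ) Pc).coeff k0 = φ.coeff k0 := by
        rw [hPct]
        have h2 : (Polynomial.C c + φ).coeff k0 = (Polynomial.C c).coeff k0 + φ.coeff k0 :=
          Polynomial.coeff_add _ _ _
        rw [h2, Polynomial.coeff_C, if_neg (by omega), zero_add]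
      rw [← h1, Polynomial.taylor_coeff, Polynomial.eval_eq_sum_range]
      apply not_irrational_sum
      intro i _
      apply not_irrational_mul
      · rw [Polynomial.hasseDeriv_coeff]
        apply not_irrational_mul
        · exact fun h => h ⟨((i + k0).choose k0 : ℚ), by push_cast; rfl⟩
        · exact hnone (i + k0) (by omega)
      · exact fun h => h ⟨(-1)^i, by push_cast; rfl⟩
    exact hratk hk0irr
  obtain ⟨k1, hk11, hk1irr⟩ := hPcirr
  have hweyl := weyl_any Pc k1 hk11 hk1irr
  have hfun : (fun N : ℕ => (N : ℂ)⁻¹ *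
      ∑ n ∈ Finset.Icc 1 N, Complex.exp (2 * Real.pi * Complex.I * ((c + φ.eval (n:ℝ)) : ℝ)))
      = AA (fun n : ℕ => ee (Pc.eval (n:ℝ))) := by
    funext N
    rw [AA, TT]
    congr 1
    rw [← Finset.Ico_add_one_right_eq_Icc, Finset.sum_Ico_eq_sum_range]
    try simp only [Nat.add_sub_cancel]
    apply Finset.sum_congr rfl
    intro n _
    rw [hPceval]
    rw [ee]
    push_cast
    ring_nf
  rw [hfun]
  exact hweyl
end
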